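/- arXiv:2407.10260 — 4 statements merged into one kernel-verified Lean document; each statement's English description precedes it below -/
import Mathlib

section
/- For any fixed real numbers ω_i and ω_j, the function f : (−1,1) → ℝ defined by f(r) = ∫_{−∞}^{ω_i} Φ((ω_j − r·x)/√(1−r²)) φ(x) dx is strictly increasing on (−1,1). -/
open MeasureTheory Real

/-- The standard normal density `φ(x) = (2π)^{-1/2} exp(−x²/2)`. -/
noncomputable def stdNormalPDF (x : ℝ) : ℝ :=
  (Real.sqrt (2 * Real.pi))⁻¹ * Real.exp (-x ^ 2 / 2)

/-- The standard normal distribution function `Φ(x) = ∫_{−∞}^x φ(u) du`. -/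
noncomputable def stdNormalCDF (x : ℝ) : ℝ :=
  ∫ u in Set.Iic x, stdNormalPDF u

section Aux
open Filter Set

lemma stdNormalPDF_pos (x : ℝ) : 0 < stdNormalPDF x := by
  have : 0 < Real.sqrt (2 * Real.pi) := Real.sqrt_pos.2 (by positivity)
  exact mul_pos (inv_pos.2 this) (Real.exp_pos _)

lemma stdNormalPDF_le (x : ℝ) : stdNormalPDF x ≤ (Real.sqrt (2 * Real.pi))⁻¹ := by
  have h1 : Real.exp (-x ^ 2 / 2) ≤ 1 := Real.exp_le_one_iff.2 (by nlinarith [sq_nonneg x])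
  calc stdNormalPDF x ≤ (Real.sqrt (2 * Real.pi))⁻¹ * 1 := by
        exact mul_le_mul_of_nonneg_left h1 (by positivity)
    _ = _ := mul_one _

lemma continuous_stdNormalPDF : Continuous stdNormalPDF := by
  unfold stdNormalPDF; fun_prop

lemma integrable_stdNormalPDF : Integrable stdNormalPDF := by
  have h : Integrable (fun x : ℝ => Real.exp (-(1/2) * x ^ 2)) :=
    integrable_exp_neg_mul_sq (by norm_num)
  have := h.const_mul (Real.sqrt (2 * Real.pi))⁻¹
  refine this.congr (Eventually.of_forall fun x => ?_)
  simp only [stdNormalPDF]; ring_nf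

lemma hasDerivAt_stdNormalCDF (x : ℝ) : HasDerivAt stdNormalCDF (stdNormalPDF x) x := by
  have hint := integrable_stdNormalPDF
  have key : stdNormalCDF = fun y =>
      (∫ u in Set.Iic (0:ℝ), stdNormalPDF u) + ∫ u in (0:ℝ)..y, stdNormalPDF u := by
    funext y
    rw [← intervalIntegral.integral_Iic_sub_Iic hint.integrableOn hint.integrableOn]
    simp [stdNormalCDF]
  rw [key]
  exact (intervalIntegral.integral_hasDerivAt_right hint.intervalIntegrable
    (continuous_stdNormalPDF.stronglyMeasurableAtFilter _ _)
    continuous_stdNormalPDF.continuousAt).const_add _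

lemma stdNormalCDF_nonneg (x : ℝ) : 0 ≤ stdNormalCDF x :=
  setIntegral_nonneg measurableSet_Iic fun y _ => (stdNormalPDF_pos y).le

lemma stdNormalCDF_le_one (x : ℝ) : stdNormalCDF x ≤ 1 := by
  have h : ∫ u, stdNormalPDF u = 1 := by
    have hg : ∫ u : ℝ, Real.exp (-(1/2) * u ^ 2) = Real.sqrt (π / (1/2)) :=
      integral_gaussian (1/2)
    have : ∫ u, stdNormalPDF u = (Real.sqrt (2 * Real.pi))⁻¹ * ∫ u : ℝ, Real.exp (-(1/2) * u ^ 2) := by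
      rw [← integral_const_mul]
      congr 1; funext u; simp only [stdNormalPDF]; ring_nf
    rw [this, hg]
    rw [show π / (1/2) = 2 * π by ring]
    field_simp
  calc stdNormalCDF x ≤ ∫ u, stdNormalPDF u :=
        setIntegral_le_integral integrable_stdNormalPDF
          (Eventually.of_forall fun y => (stdNormalPDF_pos y).le)
    _ = 1 := h

noncomputable def biv (ωj r x : ℝ) : ℝ :=
  (2 * π * Real.sqrt (1 - r ^ 2))⁻¹ *
    Real.exp (-((x - r * ωj) ^ 2 / (2 * (1 - r ^ 2))) - ωj ^ 2 / 2)

noncomputable def Dfun (ωj r x : ℝ) : ℝ := ((r * ωj - x) / (1 - r ^ 2)) * biv ωj r x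

lemma biv_pos {ωj r x : ℝ} (hr : 0 < 1 - r ^ 2) : 0 < biv ωj r x := by
  have hs : 0 < Real.sqrt (1 - r ^ 2) := Real.sqrt_pos.2 hr
  exact mul_pos (inv_pos.2 (by positivity)) (Real.exp_pos _)

lemma hasDerivAt_g {r : ℝ} (hr : 0 < 1 - r ^ 2) (ωj x : ℝ) :
    HasDerivAt (fun r => (ωj - r * x) / Real.sqrt (1 - r ^ 2))
      ((r * ωj - x) / Real.sqrt (1 - r ^ 2) ^ 3) r := by
  have hs : 0 < Real.sqrt (1 - r ^ 2) := Real.sqrt_pos.2 hr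
  have hs2 : Real.sqrt (1 - r ^ 2) ^ 2 = 1 - r ^ 2 := Real.sq_sqrt hr.le
  have hu : HasDerivAt (fun r : ℝ => ωj - r * x) (-x) r := by
    simpa using ((hasDerivAt_id r).mul_const x).const_sub ωj
  have hin : HasDerivAt (fun r : ℝ => 1 - r ^ 2) (-(2 * r)) r := by
    simpa using (hasDerivAt_pow 2 r).const_sub 1
  have hv : HasDerivAt (fun r : ℝ => Real.sqrt (1 - r ^ 2))
      (1 / (2 * Real.sqrt (1 - r ^ 2)) * (-(2 * r))) r :=
    (Real.hasDerivAt_sqrt hr.ne').comp r hin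
  have := hu.div hv hs.ne'
  refine this.congr_deriv (Eq.symm ?_)
  set s := Real.sqrt (1 - r ^ 2)
  field_simp
  linear_combination x * hs2

lemma pdf_mul_eq_Dfun {r : ℝ} (hr : 0 < 1 - r ^ 2) (ωj x : ℝ) :
    ((Real.sqrt (2 * π))⁻¹ * Real.exp (-((ωj - r * x) / Real.sqrt (1 - r ^ 2)) ^ 2 / 2)) *
      ((r * ωj - x) / Real.sqrt (1 - r ^ 2) ^ 3) *
      ((Real.sqrt (2 * π))⁻¹ * Real.exp (-x ^ 2 / 2)) = Dfun ωj r x := by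
  have hs : 0 < Real.sqrt (1 - r ^ 2) := Real.sqrt_pos.2 hr
  have hs2 : Real.sqrt (1 - r ^ 2) ^ 2 = 1 - r ^ 2 := Real.sq_sqrt hr.le
  have h2 : Real.sqrt (2 * π) * Real.sqrt (2 * π) = 2 * π :=
    Real.mul_self_sqrt (by positivity)
  set s := Real.sqrt (1 - r ^ 2)
  have hexp : Real.exp (-((ωj - r * x) / s) ^ 2 / 2) * Real.exp (-x ^ 2 / 2) =
      Real.exp (-((x - r * ωj) ^ 2 / (2 * (1 - r ^ 2))) - ωj ^ 2 / 2) := by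
    rw [← Real.exp_add]
    congr 1
    rw [← hs2]
    field_simp
    linear_combination (ωj ^ 2 - x ^ 2) * hs2
  simp only [Dfun, biv]
  rw [← hexp, ← hs2]
  have hπ : (0:ℝ) < Real.sqrt (2 * π) := Real.sqrt_pos.2 (by positivity)
  field_simp
  ring_nf
  rw [Real.sqrt_sq hs.le, Real.sq_sqrt (by positivity : (0:ℝ) ≤ π * 2)]
  ring

lemma hasDerivAt_biv_x {r : ℝ} (hr : 0 < 1 - r ^ 2) (ωj x : ℝ) :
    HasDerivAt (fun x => biv ωj r x) (Dfun ωj r x) x := by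
  have hq : HasDerivAt (fun x : ℝ => -((x - r * ωj) ^ 2 / (2 * (1 - r ^ 2))) - ωj ^ 2 / 2)
      ((r * ωj - x) / (1 - r ^ 2)) x := by
    have h1 : HasDerivAt (fun x : ℝ => x - r * ωj) 1 x := (hasDerivAt_id x).sub_const _
    have h2 : HasDerivAt (fun x : ℝ => (x - r * ωj) ^ 2) (2 * (x - r * ωj)) x := by
      simpa using (h1.fun_pow 2)
    have h3 := ((h2.div_const (2 * (1 - r ^ 2))).neg).sub_const (ωj ^ 2 / 2)
    refine h3.congr_deriv (Eq.symm ?_)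
    field_simp
    ring
  have := (hq.exp).const_mul (2 * π * Real.sqrt (1 - r ^ 2))⁻¹
  refine this.congr_deriv (Eq.symm ?_)
  simp only [Dfun, biv]
  ring

lemma tendsto_biv_atBot {r : ℝ} (hr : 0 < 1 - r ^ 2) (ωj : ℝ) :
    Tendsto (fun x => biv ωj r x) atBot (nhds 0) := by
  have h1 : Tendsto (fun x : ℝ => (x - r * ωj) ^ 2 / (2 * (1 - r ^ 2)) + ωj ^ 2 / 2)
      atBot atTop := by
    apply tendsto_atTop_add_const_right
    apply Tendsto.atTop_div_const (by positivity)
    have habs : Tendsto (fun x : ℝ => |x - r * ωj|) atBot atTop :=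
      tendsto_abs_atBot_atTop.comp (tendsto_atBot_add_const_right _ _ tendsto_id)
    have := (tendsto_pow_atTop (n := 2) (by norm_num)).comp habs
    refine this.congr fun x => ?_
    simp [sq_abs]
  have h2 : Tendsto (fun x : ℝ => Real.exp (-((x - r * ωj) ^ 2 / (2 * (1 - r ^ 2))) - ωj ^ 2 / 2))
      atBot (nhds 0) := by
    refine Real.tendsto_exp_atBot.comp (?_)
    refine (tendsto_neg_atTop_atBot.comp h1).congr fun x => by
      simp only [Function.comp_apply]; ring
  have := h2.const_mul (2 * π * Real.sqrt (1 - r ^ 2))⁻¹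
  simpa [biv] using this

lemma integrable_Dfun {r : ℝ} (hr : 0 < 1 - r ^ 2) (ωj : ℝ) :
    Integrable (fun x => Dfun ωj r x) := by
  have hb : (0:ℝ) < (2 * (1 - r ^ 2))⁻¹ := by positivity
  have h1 : Integrable (fun y : ℝ => y * Real.exp (-(2 * (1 - r ^ 2))⁻¹ * y ^ 2)) :=
    integrable_mul_exp_neg_mul_sq hb
  have h2 : Integrable (fun x : ℝ =>
      (x - r * ωj) * Real.exp (-(2 * (1 - r ^ 2))⁻¹ * (x - r * ωj) ^ 2)) :=
    h1.comp_sub_right (r * ωj)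
  have h3 := (h2.neg.const_mul
    ((2 * π * Real.sqrt (1 - r ^ 2))⁻¹ * Real.exp (-ωj ^ 2 / 2) / (1 - r ^ 2)))
  refine h3.congr (Eventually.of_forall fun x => ?_)
  simp only [Dfun, biv]
  rw [show -((x - r * ωj) ^ 2 / (2 * (1 - r ^ 2))) - ωj ^ 2 / 2 =
    (-(2 * (1 - r ^ 2))⁻¹ * (x - r * ωj) ^ 2) + (-ωj ^ 2 / 2) by field_simp; ring,
    Real.exp_add]
  simp only [Pi.neg_apply]
  ring

lemma hasDerivAt_F {r : ℝ} (hr : 0 < 1 - r ^ 2) (ωj x : ℝ) :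
    HasDerivAt (fun r => stdNormalCDF ((ωj - r * x) / Real.sqrt (1 - r ^ 2)) * stdNormalPDF x)
      (Dfun ωj r x) r := by
  have hg := hasDerivAt_g hr ωj x
  have hc := (hasDerivAt_stdNormalCDF ((ωj - r * x) / Real.sqrt (1 - r ^ 2))).comp r hg
  have h := hc.mul_const (stdNormalPDF x)
  refine h.congr_deriv (Eq.symm ?_)
  rw [← pdf_mul_eq_Dfun hr ωj x]
  simp only [stdNormalPDF, Function.comp_apply]

lemma integral_Dfun {r : ℝ} (hr : 0 < 1 - r ^ 2) (ωj ωi : ℝ) :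
    ∫ x in Set.Iic ωi, Dfun ωj r x = biv ωj r ωi := by
  have h := integral_Iic_of_hasDerivAt_of_tendsto' (f := fun x => biv ωj r x)
    (f' := fun x => Dfun ωj r x) (a := ωi)
    (fun x _ => hasDerivAt_biv_x hr ωj x) ((integrable_Dfun hr ωj).integrableOn)
    (tendsto_biv_atBot hr ωj)
  simpa using h

lemma main_hasDeriv (ωi ωj : ℝ) {r₀ : ℝ} (hr₀ : r₀ ∈ Set.Ioo (-1:ℝ) 1) :
    HasDerivAt (fun r : ℝ =>
        ∫ x in Set.Iic ωi,
          stdNormalCDF ((ωj - r * x) / Real.sqrt (1 - r ^ 2)) * stdNormalPDF x)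
      (biv ωj r₀ ωi) r₀ := by
  have cont_cdf : Continuous stdNormalCDF :=
    continuous_iff_continuousAt.2 fun y =>
      (hasDerivAt_stdNormalCDF y).differentiableAt.continuousAt
  have cont_F : ∀ r : ℝ, Continuous
      (fun x => stdNormalCDF ((ωj - r * x) / Real.sqrt (1 - r ^ 2)) * stdNormalPDF x) := by
    intro r
    exact (cont_cdf.comp (by fun_prop)).mul continuous_stdNormalPDF
  have cont_D : ∀ r : ℝ, Continuous (fun x => Dfun ωj r x) := by
    intro r; unfold Dfun biv; fun_prop
  have habs : |r₀| < 1 := abs_lt.2 ⟨hr₀.1, hr₀.2⟩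
  have habs0 : 0 ≤ |r₀| := abs_nonneg _
  set ε := (1 - |r₀|) / 2 with hε
  have hεpos : 0 < ε := by rw [hε]; linarith
  set m := (1 + |r₀|) / 2 with hm
  have hm1 : m < 1 := by rw [hm]; linarith
  have hm0 : 0 < m := by rw [hm]; linarith
  have hball : ∀ r ∈ Metric.ball r₀ ε, |r| < m := by
    intro r hr
    rw [Metric.mem_ball, Real.dist_eq] at hr
    have h1 : |r| ≤ |r - r₀| + |r₀| := by
      have := abs_add_le (r - r₀) r₀; simpa using this
    rw [hm]; rw [hε] at hr; linarith
  have hδ : 0 < 1 - m ^ 2 := by nlinarith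
  have hrpos : ∀ r : ℝ, |r| < m → 1 - m ^ 2 ≤ 1 - r ^ 2 := by
    intro r h
    nlinarith [sq_abs r, abs_nonneg r]
  -- the dominating function
  set C := (1 - m ^ 2)⁻¹ * (2 * π * Real.sqrt (1 - m ^ 2))⁻¹ with hC
  set bound := fun x : ℝ => C * ((|ωj| + |x|) * Real.exp (-x ^ 2 / 4)) with hbound
  have hboundint : Integrable bound := by
    have h4 : Integrable (fun x : ℝ => Real.exp (-x ^ 2 / 4)) := by
      have := integrable_exp_neg_mul_sq (show (0:ℝ) < 1/4 by norm_num)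
      exact this.congr (Eventually.of_forall fun x => by ring_nf)
    have h5 : Integrable (fun x : ℝ => |x| * Real.exp (-x ^ 2 / 4)) := by
      have h := (integrable_mul_exp_neg_mul_sq (show (0:ℝ) < 1/4 by norm_num)).abs
      refine h.congr (Eventually.of_forall fun x => ?_)
      simp only [abs_mul, abs_of_pos (Real.exp_pos _)]
      ring_nf
    have := ((h4.const_mul |ωj|).add h5).const_mul C
    exact this.congr (Eventually.of_forall fun x => by
      simp only [Pi.add_apply, hbound]; ring)
  have key_bound : ∀ (r : ℝ), |r| < m → ∀ x : ℝ, ‖Dfun ωj r x‖ ≤ bound x := by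
    intro r hrm x
    have h1 : 0 < 1 - r ^ 2 := lt_of_lt_of_le hδ (hrpos r hrm)
    have hr1 : |r| ≤ 1 := le_of_lt (lt_of_lt_of_le hrm hm1.le)
    have hr2 : r ^ 2 ≤ 1 := by nlinarith [sq_abs r]
    have hsδ : Real.sqrt (1 - m ^ 2) ≤ Real.sqrt (1 - r ^ 2) :=
      Real.sqrt_le_sqrt (hrpos r hrm)
    have hsδ0 : 0 < Real.sqrt (1 - m ^ 2) := Real.sqrt_pos.2 hδ
    have e1 : |r * ωj - x| ≤ |ωj| + |x| := by
      calc |r * ωj - x| ≤ |r * ωj| + |x| := abs_sub _ _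
        _ ≤ |ωj| + |x| := by
            rw [abs_mul]
            have : |r| * |ωj| ≤ 1 * |ωj| :=
              mul_le_mul_of_nonneg_right hr1 (abs_nonneg _)
            linarith
    -- exponent bound
    have eexp : -((x - r * ωj) ^ 2 / (2 * (1 - r ^ 2))) - ωj ^ 2 / 2 ≤ -x ^ 2 / 4 := by
      have k1 : (x - r * ωj) ^ 2 / 2 ≤ (x - r * ωj) ^ 2 / (2 * (1 - r ^ 2)) := by
        apply div_le_div_of_nonneg_left (sq_nonneg _) (by nlinarith) (by nlinarith)
      have k2 : x ^ 2 / 2 - (r * ωj) ^ 2 ≤ (x - r * ωj) ^ 2 := by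
        nlinarith [sq_nonneg (x - 2 * (r * ωj))]
      have k3 : (r * ωj) ^ 2 ≤ ωj ^ 2 := by nlinarith [sq_nonneg ωj]
      linarith
    have e2 : biv ωj r x ≤ (2 * π * Real.sqrt (1 - m ^ 2))⁻¹ * Real.exp (-x ^ 2 / 4) := by
      unfold biv
      have hinv : (2 * π * Real.sqrt (1 - r ^ 2))⁻¹ ≤ (2 * π * Real.sqrt (1 - m ^ 2))⁻¹ := by
        gcongr
      exact mul_le_mul hinv (Real.exp_le_exp.2 eexp) (Real.exp_pos _).le (by positivity)
    have hDnn : 0 < biv ωj r x := biv_pos h1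
    rw [Real.norm_eq_abs]
    unfold Dfun
    rw [abs_mul, abs_div, abs_of_pos h1, abs_of_pos hDnn]
    calc |r * ωj - x| / (1 - r ^ 2) * biv ωj r x
        ≤ (|ωj| + |x|) / (1 - m ^ 2) *
            ((2 * π * Real.sqrt (1 - m ^ 2))⁻¹ * Real.exp (-x ^ 2 / 4)) := by
          apply mul_le_mul _ e2 hDnn.le (by positivity)
          exact div_le_div₀ (by positivity) e1 hδ (hrpos r hrm)
      _ = bound x := by rw [hbound, hC]; field_simp; try ring
  -- apply differentiation under the integral sign
  have main := hasDerivAt_integral_of_dominated_loc_of_deriv_le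
    (μ := volume.restrict (Set.Iic ωi)) (x₀ := r₀)
    (F := fun r x => stdNormalCDF ((ωj - r * x) / Real.sqrt (1 - r ^ 2)) * stdNormalPDF x)
    (F' := fun r x => Dfun ωj r x) (bound := bound) (Metric.ball_mem_nhds r₀ hεpos)
    (Eventually.of_forall fun r => ((cont_F r).aestronglyMeasurable).restrict)
    ?_ ((cont_D r₀).aestronglyMeasurable.restrict)
    (Eventually.of_forall fun x => fun r hr => key_bound r (hball r hr) x)
    hboundint.restrict
    (Eventually.of_forall fun x => fun r hr =>
      hasDerivAt_F (lt_of_lt_of_le hδ (hrpos r (hball r hr))) ωj x)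
  · have := main.2
    rwa [integral_Dfun (by nlinarith [hr₀.1, hr₀.2] : 0 < 1 - r₀ ^ 2) ωj ωi] at this
  · -- integrability of F r₀
    refine Integrable.mono integrable_stdNormalPDF.restrict
      ((cont_F r₀).aestronglyMeasurable.restrict)
      (Eventually.of_forall fun x => ?_)
    rw [Real.norm_eq_abs, Real.norm_eq_abs,
      abs_of_nonneg (mul_nonneg (stdNormalCDF_nonneg _) (stdNormalPDF_pos _).le),
      abs_of_pos (stdNormalPDF_pos _)]
    calc stdNormalCDF _ * stdNormalPDF x ≤ 1 * stdNormalPDF x :=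
          mul_le_mul_of_nonneg_right (stdNormalCDF_le_one _) (stdNormalPDF_pos _).le
      _ = stdNormalPDF x := one_mul _

end Aux

/-- For fixed `ω_i, ω_j ∈ ℝ`, the function
`r ↦ ∫_{−∞}^{ω_i} Φ((ω_j − r·x)/√(1−r²)) φ(x) dx` is strictly increasing on `(−1,1)`. -/
theorem stmt3 (ωi ωj : ℝ) :
    StrictMonoOn
      (fun r : ℝ =>
        ∫ x in Set.Iic ωi,
          stdNormalCDF ((ωj - r * x) / Real.sqrt (1 - r ^ 2)) * stdNormalPDF x)
      (Set.Ioo (-1 : ℝ) 1) := by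
  apply strictMonoOn_of_deriv_pos (convex_Ioo _ _)
  · intro r hr
    exact ((main_hasDeriv ωi ωj hr).differentiableAt.continuousAt).continuousWithinAt
  · intro r hr
    rw [interior_Ioo] at hr
    rw [(main_hasDeriv ωi ωj hr).deriv]
    exact biv_pos (by nlinarith [hr.1, hr.2])
end

section
/- Let (Ω, 𝓐, μ) be a probability space and T : Ω → Ω a measure-preserving transformation, and let 𝓘 = { B ∈ 𝓐 : T^{−1}(B) = B } be the σ-algebra of T-invariant sets. If A ∈ 𝓐 satisfies μ[1_A | 𝓘] > 0 almost surely (conditional expectation of the indicator of A given 𝓘), then μ( limsup_n T^{−n}(A) ) = 1, i.e. almost every ω ∈ Ω belongs to T^{−n}(A) for infinitely many n. -/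
open MeasureTheory Filter

/-- The σ-algebra of `T`-invariant measurable sets. -/
def invariantsSigma {Ω : Type*} [m : MeasurableSpace Ω] (T : Ω → Ω) : MeasurableSpace Ω where
  MeasurableSet' s := MeasurableSet s ∧ T ⁻¹' s = s
  measurableSet_empty := ⟨MeasurableSet.empty, by simp⟩
  measurableSet_compl s hs := ⟨hs.1.compl, by rw [Set.preimage_compl, hs.2]⟩
  measurableSet_iUnion f hf := ⟨MeasurableSet.iUnion fun i => (hf i).1, by
    rw [Set.preimage_iUnion]; exact Set.iUnion_congr fun i => (hf i).2⟩

/-- If `T` is a measure-preserving transformation of a probability space and the conditional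
expectation of `1_A` given the invariant σ-algebra is a.s. positive, then almost every point
visits `A` infinitely often: `μ(limsup_n T^{−n}(A)) = 1`. -/
theorem stmt10 {Ω : Type*} [MeasurableSpace Ω] (μ : Measure Ω) [IsProbabilityMeasure μ]
    (T : Ω → Ω) (hT : MeasurePreserving T μ μ) (A : Set Ω) (hA : MeasurableSet A)
    (hpos : ∀ᵐ ω ∂μ,
      0 < (μ[Set.indicator A (fun _ => (1 : ℝ)) | invariantsSigma T]) ω) :
    μ (Filter.limsup (fun n : ℕ => T^[n] ⁻¹' A) Filter.atTop) = 1 := by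
  set s : ℕ → Set Ω := fun n => T^[n] ⁻¹' A with hs
  set L : Set Ω := Filter.limsup s Filter.atTop with hL
  have hmeas : ∀ n, MeasurableSet (s n) := fun n =>
    hA.preimage (hT.measurable.iterate n)
  have hLmeas : MeasurableSet L := MeasurableSet.measurableSet_limsup hmeas
  -- invariance of L
  have hinv : T ⁻¹' L = L := by
    have h1 : T ⁻¹' L = Filter.limsup (fun n => s (n + 1)) Filter.atTop := by
      rw [hL, limsup_eq_iInf_iSup_of_nat, limsup_eq_iInf_iSup_of_nat]
      simp only [Set.sInf_eq_sInter, Set.iInf_eq_iInter, Set.iSup_eq_iUnion,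
        Set.preimage_iInter, Set.preimage_iUnion]
      refine Set.iInter_congr fun n => Set.iUnion_congr fun m => Set.iUnion_congr fun _ => ?_
      rw [hs]
      simp only [← Set.preimage_comp, ← Function.iterate_succ]
    rw [h1, limsup_nat_add]
  have hLinv : MeasurableSet[invariantsSigma T] L := ⟨hLmeas, hinv⟩
  have hLc : MeasurableSet[invariantsSigma T] Lᶜ := hLinv.compl
  have hm : invariantsSigma T ≤ ‹MeasurableSpace Ω› := fun t ht => ht.1
  -- Poincaré recurrence: a.e. point of A is in L
  have hrec : ∀ᵐ ω ∂μ, ω ∈ A → ω ∈ L := by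
    filter_upwards [hT.conservative.ae_mem_imp_frequently_image_mem hA.nullMeasurableSet]
      with ω hω hωA
    rw [hL, mem_limsup_iff_frequently_mem]
    exact hω hωA
  have hAL : μ (A ∩ Lᶜ) = 0 := by
    have hsub : A ∩ Lᶜ ⊆ {x | ¬(x ∈ A → x ∈ L)} := fun x hx => by
      simp only [Set.mem_setOf_eq, Classical.not_imp]; exact ⟨hx.1, hx.2⟩
    exact measure_mono_null hsub (ae_iff.1 hrec)
  have hint : Integrable (A.indicator fun _ => (1 : ℝ)) μ :=
    (integrable_const (1 : ℝ)).indicator hA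
  -- integral of condexp over Lᶜ is 0
  have hzero : ∫ ω in Lᶜ, (μ[A.indicator (fun _ => (1 : ℝ)) | invariantsSigma T]) ω ∂μ = 0 := by
    rw [setIntegral_condExp hm hint hLc]
    rw [integral_indicator hA, setIntegral_const, smul_eq_mul, mul_one,
      measureReal_def, Measure.restrict_apply hA, hAL, ENNReal.toReal_zero]
  have hnonneg : 0 ≤ᵐ[μ.restrict Lᶜ]
      (μ[A.indicator (fun _ => (1 : ℝ)) | invariantsSigma T]) :=
    (ae_restrict_of_ae (hpos.mono fun ω hω => le_of_lt hω))
  have heq0 : (μ[A.indicator (fun _ => (1 : ℝ)) | invariantsSigma T]) =ᵐ[μ.restrict Lᶜ] 0 :=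
    (integral_eq_zero_iff_of_nonneg_ae hnonneg integrable_condExp.integrableOn).1 hzero
  have hfalse : ∀ᵐ ω ∂μ.restrict Lᶜ, False := by
    filter_upwards [heq0, ae_restrict_of_ae hpos] with ω h1 h2
    rw [h1] at h2; exact lt_irrefl 0 h2
  have hLc0 : μ Lᶜ = 0 := by
    have := ae_iff.1 hfalse
    simpa [Measure.restrict_apply, hLmeas.compl] using this
  exact (prob_compl_eq_zero_iff hLmeas).1 hLc0
end

section
/- Let (ζ_t)_{t∈ℤ} be a stationary and ergodic ℝ^n-valued process (its law on (ℝ^n)^ℤ is invariant and ergodic under the coordinate shift), let g : ({0,1}^k)^p × ℝ^n → ℝ^k be measurable, and suppose there exists j = (j₁,…,j_k) ∈ {0,1}^k such that, with positive probability, for every t ∈ {1,…,p}, every (y₁,…,y_p) ∈ ({0,1}^k)^p and every i ∈ {1,…,k}, one has 1_{g_i(y₁,…,y_p,ζ_t) > 0} = j_i. Then there exists a unique (up to almost-sure equality) stationary and ergodic {0,1}^k-valued process (Y_t)_{t∈ℤ} satisfying, for all t ∈ ℤ, Y_{i,t} = 1_{g_i(Y_{t−1},…,Y_{t−p},ζ_t)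 > 0} for i = 1,…,k, almost surely; moreover there is a measurable map H : (ℝ^n)^ℕ → {0,1}^k with Y_t = H(ζ_t, ζ_{t−1}, …) a.s. for all t, and the joint process (Y_t, ζ_t)_{t∈ℤ} is stationary and ergodic. -/
open MeasureTheory

/-- The coordinate shift on two-sided sequences. -/
def shiftZ {E : Type*} (x : ℤ → E) : ℤ → E := fun t => x (t + 1)

/-- The law of the path `(X_t)_{t∈ℤ}` on `E^ℤ`. -/
noncomputable def pathLaw {Ω E : Type*} [MeasurableSpace Ω] [MeasurableSpace E]
    (μ : Measure Ω) (X : ℤ → Ω → E) : Measure (ℤ → E) :=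
  Measure.map (fun ω t => X t ω) μ

/-- A process is stationary and ergodic if its law on `E^ℤ` is invariant under the
coordinate shift and every shift-invariant measurable set has law-measure `0` or `1`. -/
def IsStatErg {Ω E : Type*} [MeasurableSpace Ω] [MeasurableSpace E]
    (μ : Measure Ω) (X : ℤ → Ω → E) : Prop :=
  MeasurePreserving shiftZ (pathLaw μ X) (pathLaw μ X) ∧
    ∀ A : Set (ℤ → E), MeasurableSet A → shiftZ ⁻¹' A = A →
      pathLaw μ X A = 0 ∨ pathLaw μ X A = 1

lemma measurable_shiftZ {E : Type*} [MeasurableSpace E] :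
    Measurable (shiftZ : (ℤ → E) → ℤ → E) :=
  measurable_pi_lambda _ fun t => measurable_pi_apply (t + 1)

lemma factor {E F : Type*} [MeasurableSpace E] [MeasurableSpace F] {ν : Measure (ℤ → E)}
    (hsh : MeasurePreserving shiftZ ν ν)
    (herg : ∀ A : Set (ℤ → E), MeasurableSet A → shiftZ ⁻¹' A = A → ν A = 0 ∨ ν A = 1)
    {Φ : (ℤ → E) → (ℤ → F)} (hΦ : Measurable Φ) (hcomm : ∀ x, Φ (shiftZ x) = shiftZ (Φ x)) :
    MeasurePreserving shiftZ (ν.map Φ) (ν.map Φ) ∧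
      ∀ A : Set (ℤ → F), MeasurableSet A → shiftZ ⁻¹' A = A →
        ν.map Φ A = 0 ∨ ν.map Φ A = 1 := by
  have hmsF : Measurable (shiftZ : (ℤ → F) → ℤ → F) := measurable_shiftZ
  constructor
  · refine ⟨hmsF, ?_⟩
    rw [Measure.map_map hmsF hΦ]
    have h1 : (shiftZ : (ℤ → F) → ℤ → F) ∘ Φ = Φ ∘ shiftZ := funext fun x => (hcomm x).symm
    rw [h1, ← Measure.map_map hΦ hsh.measurable, hsh.map_eq]
  · intro A hA hinv
    rw [Measure.map_apply hΦ hA]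
    refine herg _ (hΦ hA) ?_
    have h2 : shiftZ ⁻¹' (Φ ⁻¹' A) = Φ ⁻¹' (shiftZ ⁻¹' A) := by
      ext x
      simp only [Set.mem_preimage, hcomm x]
    rw [h2, hinv]

section aux
variable {n k p : ℕ} (g : (Fin p → Fin k → Bool) → (Fin n → ℝ) → Fin k → ℝ)
  (j : Fin k → Bool)

def Wc (x : ℤ → Fin n → ℝ) (s : ℤ) : Prop :=
  ∀ u : ℤ, 1 ≤ u → u ≤ (p : ℤ) → ∀ y : Fin p → Fin k → Bool, ∀ i : Fin k,
    decide (0 < g y (x (s + u)) i) = j i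

noncomputable def val (x : ℤ → Fin n → ℝ) (s : ℤ) : ℕ → Fin k → Bool
  | 0 => j
  | (m+1) => fun i => decide (0 < g
      (fun l : Fin p => if h : (l : ℕ) ≤ m then val x s (m - (l : ℕ)) else j)
      (x (s + (m : ℤ) + 1)) i)
  decreasing_by all_goals exact Nat.lt_succ_of_le (Nat.sub_le _ _)

lemma val_succ (x : ℤ → Fin n → ℝ) (s : ℤ) (m : ℕ) :
    val g j x s (m+1) = fun i => decide (0 < g
      (fun l : Fin p => if (l : ℕ) ≤ m then val g j x s (m - (l : ℕ)) else j)
      (x (s + (m : ℤ) + 1)) i) := by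
  rw [val]
  simp only [dite_eq_ite]

lemma val_zero (x : ℤ → Fin n → ℝ) (s : ℤ) : val g j x s 0 = j := by rw [val]

lemma coal {x : ℤ → Fin n → ℝ} {s s' : ℤ} (hW : Wc g j x s) (hs' : s' ≤ s) :
    ∀ d : ℕ, val g j x s' ((s + 1 + d - s').toNat) = val g j x s (d+1) := by
  intro d
  induction d using Nat.strong_induction_on with
  | _ d IH =>
    set e : ℕ := (s + d - s').toNat with he
    have h1 : (s + 1 + d - s').toNat = e + 1 := by omega
    rw [h1, val_succ, val_succ]
    have hx : (s' + (e : ℤ) + 1) = s + (d : ℤ) + 1 := by omega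
    rw [hx]
    rcases le_or_gt p d with hpd | hdp
    · funext i
      have harg : (fun l : Fin p => if (l : ℕ) ≤ e then val g j x s' (e - (l : ℕ)) else j)
          = (fun l : Fin p => if (l : ℕ) ≤ d then val g j x s (d - (l : ℕ)) else j) := by
        funext l
        have hl : (l : ℕ) < p := l.isLt
        have hle : (l : ℕ) ≤ e := by omega
        rw [if_pos hle, if_pos (by omega : (l : ℕ) ≤ d)]
        have := IH (d - 1 - (l : ℕ)) (by omega)
        have h2 : (s + 1 + ((d - 1 - (l : ℕ) : ℕ) : ℤ) - s').toNat = e - (l : ℕ) := by omega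
        have h3 : (d - 1 - (l : ℕ)) + 1 = d - (l : ℕ) := by omega
        rw [h2, h3] at this
        exact this
      rw [harg]
    · funext i
      have hW1 := hW ((d : ℤ) + 1) (by omega) (by omega)
        (fun l : Fin p => if (l : ℕ) ≤ e then val g j x s' (e - (l : ℕ)) else j) i
      have hW2 := hW ((d : ℤ) + 1) (by omega) (by omega)
        (fun l : Fin p => if (l : ℕ) ≤ d then val g j x s (d - (l : ℕ)) else j) i
      rw [show s + ((d : ℤ) + 1) = s + (d : ℤ) + 1 by ring] at hW1 hW2
      rw [hW1, hW2]

lemma coal' {x : ℤ → Fin n → ℝ} {s s' : ℤ} (hW : Wc g j x s) (hs' : s' ≤ s)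
    {T : ℤ} (hT : s + 1 ≤ T) :
    val g j x s' ((T - s').toNat) = val g j x s ((T - s).toNat) := by
  have h := coal g j hW hs' (T - s - 1).toNat
  rw [show s + 1 + ((T - s - 1).toNat : ℤ) - s' = T - s' by omega] at h
  rw [show (T - s).toNat = (T - s - 1).toNat + 1 by omega]
  exact h

open Classical in
noncomputable def Yt (x : ℤ → Fin n → ℝ) (t : ℤ) : Fin k → Bool :=
  fun i => decide (∃ m : ℕ, Wc g j x (t - p - 1 - m) ∧
    val g j x (t - p - 1 - m) (p + 1 + m) i = true)

lemma Yt_eq_val {x : ℤ → Fin n → ℝ} {s t : ℤ} (hW : Wc g j x s) (ht : s ≤ t - p - 1) :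
    Yt g j x t = val g j x s ((t - s).toNat) := by
  have key : ∀ m : ℕ, Wc g j x (t - p - 1 - m) →
      val g j x (t - p - 1 - m) (p + 1 + m) = val g j x s ((t - s).toNat) := by
    intro m hm
    rcases le_total s (t - p - 1 - m) with h | h
    · have := coal' g j hm h (T := t) (by omega)
      rw [show (t - (t - p - 1 - m)).toNat = p + 1 + m by omega] at this
      rw [← this]
    · have := coal' g j hW h (T := t) (by omega)
      rw [show (t - (t - p - 1 - m)).toNat = p + 1 + m by omega] at this
      exact this
  classical
  funext i
  simp only [Yt]
  cases hb : val g j x s ((t - s).toNat) i with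
  | false =>
    apply decide_eq_false
    rintro ⟨m, hm, hv⟩
    rw [key m hm, hb] at hv
    exact Bool.false_ne_true hv
  | true =>
    apply decide_eq_true
    refine ⟨(t - p - 1 - s).toNat, ?_, ?_⟩
    · rwa [show t - p - 1 - ((t - p - 1 - s).toNat : ℤ) = s by omega]
    · rw [show t - p - 1 - ((t - p - 1 - s).toNat : ℤ) = s by omega,
        show p + 1 + (t - p - 1 - s).toNat = (t - s).toNat by omega, hb]

lemma Yt_rec {x : ℤ → Fin n → ℝ} (hD : ∀ t₀ : ℤ, ∃ m : ℕ, Wc g j x (t₀ - p - 1 - m))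
    (t : ℤ) (i : Fin k) :
    Yt g j x t i = decide (0 < g (fun l : Fin p => Yt g j x (t - 1 - (l : ℕ))) (x t) i) := by
  obtain ⟨m, hm⟩ := hD (t - p)
  set s : ℤ := t - p - p - 1 - m with hsdef
  have hWs : Wc g j x s := hm
  have h1 : Yt g j x t = val g j x s ((t - s).toNat) := Yt_eq_val g j hWs (by omega)
  set M : ℕ := (t - s - 1).toNat with hMdef
  have hM : (t - s).toNat = M + 1 := by omega
  rw [h1, hM, val_succ]
  rw [show s + (M : ℤ) + 1 = t by omega]
  have harg : (fun l : Fin p => if (l : ℕ) ≤ M then val g j x s (M - (l : ℕ)) else j)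
      = (fun l : Fin p => Yt g j x (t - 1 - (l : ℕ))) := by
    funext l
    have hl : (l : ℕ) < p := l.isLt
    have hpM : p ≤ M := by omega
    rw [if_pos (by omega : (l : ℕ) ≤ M)]
    have h2 : Yt g j x (t - 1 - (l : ℕ)) = val g j x s ((t - 1 - (l : ℕ) - s).toNat) :=
      Yt_eq_val g j hWs (by omega)
    rw [h2, show (t - 1 - ((l : ℕ) : ℤ) - s).toNat = M - (l : ℕ) by omega]
  rw [harg]

lemma Wc_shift (x : ℤ → Fin n → ℝ) (c s : ℤ) :
    Wc g j (fun u => x (u + c)) s ↔ Wc g j x (s + c) := by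
  constructor
  · intro h u h1 h2 y i
    have := h u h1 h2 y i
    beta_reduce at this
    rwa [show s + u + c = s + c + u by ring] at this
  · intro h u h1 h2 y i
    have := h u h1 h2 y i
    beta_reduce
    rwa [show s + c + u = s + u + c by ring] at this

lemma val_shift (x : ℤ → Fin n → ℝ) (c s : ℤ) (m : ℕ) :
    val g j (fun u => x (u + c)) s m = val g j x (s + c) m := by
  induction m using Nat.strong_induction_on with
  | _ m IH =>
    match m with
    | 0 => rw [val_zero, val_zero]
    | (m+1) =>
      rw [val_succ, val_succ]
      funext i
      beta_reduce
      rw [show s + (m : ℤ) + 1 + c = s + c + (m : ℤ) + 1 by ring]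
      have harg : (fun l : Fin p => if (l : ℕ) ≤ m then
            val g j (fun u => x (u + c)) s (m - (l : ℕ)) else j)
          = (fun l : Fin p => if (l : ℕ) ≤ m then val g j x (s + c) (m - (l : ℕ)) else j) := by
        funext l
        by_cases hl : (l : ℕ) ≤ m
        · rw [if_pos hl, if_pos hl, IH _ (Nat.lt_succ_of_le (Nat.sub_le _ _))]
        · rw [if_neg hl, if_neg hl]
      rw [harg]

lemma Yt_shift (x : ℤ → Fin n → ℝ) (c t : ℤ) :
    Yt g j (fun u => x (u + c)) t = Yt g j x (t + c) := by
  funext i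
  simp only [Yt]
  rw [decide_eq_decide]
  constructor
  · rintro ⟨m, h1, h2⟩
    refine ⟨m, ?_, ?_⟩
    · have := (Wc_shift g j x c _).mp h1
      rwa [show t - p - 1 - (m : ℤ) + c = t + c - p - 1 - m by ring] at this
    · rw [val_shift] at h2
      rwa [show t - p - 1 - (m : ℤ) + c = t + c - p - 1 - m by ring] at h2
  · rintro ⟨m, h1, h2⟩
    refine ⟨m, ?_, ?_⟩
    · rw [Wc_shift, show t - p - 1 - (m : ℤ) + c = t + c - p - 1 - m by ring]
      exact h1
    · rw [val_shift, show t - p - 1 - (m : ℤ) + c = t + c - p - 1 - m by ring]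
      exact h2

lemma val_congr {x x' : ℤ → Fin n → ℝ} (s : ℤ) (m : ℕ)
    (h : ∀ u : ℤ, u ≤ s + m → x u = x' u) :
    val g j x s m = val g j x' s m := by
  induction m using Nat.strong_induction_on with
  | _ m IH =>
    match m with
    | 0 => rw [val_zero, val_zero]
    | (m+1) =>
      rw [val_succ, val_succ]
      funext i
      rw [h (s + (m : ℤ) + 1) (by push_cast; omega)]
      have harg : (fun l : Fin p => if (l : ℕ) ≤ m then val g j x s (m - (l : ℕ)) else j)
          = (fun l : Fin p => if (l : ℕ) ≤ m then val g j x' s (m - (l : ℕ)) else j) := by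
        funext l
        by_cases hl : (l : ℕ) ≤ m
        · rw [if_pos hl, if_pos hl,
            IH _ (Nat.lt_succ_of_le (Nat.sub_le _ _)) (fun u hu => h u (by push_cast at hu ⊢; omega))]
        · rw [if_neg hl, if_neg hl]
      rw [harg]

lemma Wc_congr {x x' : ℤ → Fin n → ℝ} (s : ℤ) (h : ∀ u : ℤ, u ≤ s + p → x u = x' u) :
    Wc g j x s ↔ Wc g j x' s := by
  constructor
  · intro hW u h1 h2 y i
    rw [← h (s + u) (by omega)]
    exact hW u h1 h2 y i
  · intro hW u h1 h2 y i
    rw [h (s + u) (by omega)]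
    exact hW u h1 h2 y i

lemma Yt_congr {x x' : ℤ → Fin n → ℝ} (t : ℤ) (h : ∀ u : ℤ, u ≤ t → x u = x' u) :
    Yt g j x t = Yt g j x' t := by
  funext i
  simp only [Yt]
  rw [decide_eq_decide]
  constructor
  · rintro ⟨m, h1, h2⟩
    refine ⟨m, ?_, ?_⟩
    · exact (Wc_congr g j _ (fun u hu => h u (by omega))).mp h1
    · rw [← val_congr g j _ _ (fun u hu => h u (by push_cast at hu ⊢; omega))]
      exact h2
  · rintro ⟨m, h1, h2⟩
    refine ⟨m, ?_, ?_⟩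
    · exact (Wc_congr g j _ (fun u hu => h u (by omega))).mpr h1
    · rw [val_congr g j _ _ (fun u hu => h u (by push_cast at hu ⊢; omega))]
      exact h2


lemma measurable_decide_pos : Measurable fun r : ℝ => decide (0 < r) := by
  apply measurable_to_countable'
  intro b
  cases b
  · have : (fun r : ℝ => decide (0 < r)) ⁻¹' {false} = Set.Iic 0 := by
      ext r; simp [not_lt]
    rw [this]; exact measurableSet_Iic
  · have : (fun r : ℝ => decide (0 < r)) ⁻¹' {true} = Set.Ioi 0 := by
      ext r; simp
    rw [this]; exact measurableSet_Ioi

lemma measurable_decide_mem {α : Type*} [MeasurableSpace α] {P : α → Prop}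
    [∀ a, Decidable (P a)] (h : MeasurableSet {a | P a}) :
    Measurable fun a => decide (P a) := by
  apply measurable_to_countable'
  intro b
  cases b
  · have : (fun a => decide (P a)) ⁻¹' {false} = {a | P a}ᶜ := by
      ext a; by_cases hP : P a <;> simp [hP]
    rw [this]; exact h.compl
  · have : (fun a => decide (P a)) ⁻¹' {true} = {a | P a} := by
      ext a; simp
    rw [this]; exact h

lemma val_unique {x : ℤ → Fin n → ℝ} {Z : ℤ → Fin k → Bool}
    (hZ : ∀ τ : ℤ, ∀ i : Fin k,
      Z τ i = decide (0 < g (fun l : Fin p => Z (τ - 1 - (l : ℕ))) (x τ) i))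
    {s : ℤ} (hW : Wc g j x s) : ∀ d : ℕ, Z (s + 1 + d) = val g j x s (d + 1) := by
  intro d
  induction d using Nat.strong_induction_on with
  | _ d IH =>
    funext i
    rw [hZ (s + 1 + d) i, val_succ]
    beta_reduce
    rw [show s + 1 + (d : ℤ) = s + (d : ℤ) + 1 by ring]
    rcases le_or_gt p d with hpd | hdp
    · have harg : (fun l : Fin p => Z (s + (d : ℤ) + 1 - 1 - (l : ℕ)))
          = (fun l : Fin p => if (l : ℕ) ≤ d then val g j x s (d - (l : ℕ)) else j) := by
        funext l
        have hl : (l : ℕ) < p := l.isLt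
        rw [if_pos (by omega : (l : ℕ) ≤ d)]
        have hIH := IH (d - 1 - (l : ℕ)) (by omega)
        rw [show s + 1 + ((d - 1 - (l : ℕ) : ℕ) : ℤ) = s + (d : ℤ) + 1 - 1 - ((l : ℕ) : ℤ)
          by omega] at hIH
        rw [hIH, show (d - 1 - (l : ℕ)) + 1 = d - (l : ℕ) by omega]
      rw [harg]
    · have hW1 := hW ((d : ℤ) + 1) (by omega) (by omega)
        (fun l : Fin p => Z (s + (d : ℤ) + 1 - 1 - (l : ℕ))) i
      have hW2 := hW ((d : ℤ) + 1) (by omega) (by omega)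
        (fun l : Fin p => if (l : ℕ) ≤ d then val g j x s (d - (l : ℕ)) else j) i
      rw [show s + ((d : ℤ) + 1) = s + (d : ℤ) + 1 by ring] at hW1 hW2
      rw [hW1, hW2]

variable (hg : Measurable fun q : (Fin p → Fin k → Bool) × (Fin n → ℝ) => g q.1 q.2)
include hg

lemma measurableSet_Wc (s : ℤ) : MeasurableSet {x : ℤ → Fin n → ℝ | Wc g j x s} := by
  have hset : {x : ℤ → Fin n → ℝ | Wc g j x s} =
      ⋂ (u : ℤ), ⋂ (_ : 1 ≤ u), ⋂ (_ : u ≤ (p : ℤ)), ⋂ (y : Fin p → Fin k → Bool),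
        ⋂ (i : Fin k), {x : ℤ → Fin n → ℝ | decide (0 < g y (x (s + u)) i) = j i} := by
    ext x
    simp only [Wc, Set.mem_setOf_eq, Set.mem_iInter]
  rw [hset]
  refine MeasurableSet.iInter fun u => MeasurableSet.iInter fun _ =>
    MeasurableSet.iInter fun _ => MeasurableSet.iInter fun y => MeasurableSet.iInter fun i => ?_
  have hf : Measurable fun x : ℤ → Fin n → ℝ => decide (0 < g y (x (s + u)) i) :=
    measurable_decide_pos.comp
      (((measurable_pi_apply i).comp (hg.comp (measurable_const.prodMk measurable_id))).comp
        (measurable_pi_apply (s + u)))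
  exact hf (measurableSet_singleton (j i))

lemma measurable_val (s : ℤ) (m : ℕ) :
    Measurable fun x : ℤ → Fin n → ℝ => val g j x s m := by
  induction m using Nat.strong_induction_on with
  | _ m IH =>
    match m with
    | 0 =>
      simp only [val_zero]
      exact measurable_const
    | (m+1) =>
      simp only [val_succ]
      apply measurable_pi_lambda
      intro i
      have hA : Measurable fun x : ℤ → Fin n → ℝ =>
          (fun l : Fin p => if (l : ℕ) ≤ m then val g j x s (m - (l : ℕ)) else j) := by
        apply measurable_pi_lambda
        intro l
        by_cases hl : (l : ℕ) ≤ m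
        · simp only [if_pos hl]
          exact IH _ (Nat.lt_succ_of_le (Nat.sub_le _ _))
        · simp only [if_neg hl]
          exact measurable_const
      have hG : Measurable fun x : ℤ → Fin n → ℝ =>
          g (fun l : Fin p => if (l : ℕ) ≤ m then val g j x s (m - (l : ℕ)) else j)
            (x (s + (m : ℤ) + 1)) :=
        hg.comp (hA.prodMk (measurable_pi_apply (s + (m : ℤ) + 1)))
      exact measurable_decide_pos.comp ((measurable_pi_apply i).comp hG)

lemma measurable_Yt (t : ℤ) : Measurable fun x : ℤ → Fin n → ℝ => Yt g j x t := by
  classical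
  apply measurable_pi_lambda
  intro i
  simp only [Yt]
  apply measurable_decide_mem
  have hset : {x : ℤ → Fin n → ℝ | ∃ m : ℕ, Wc g j x (t - p - 1 - m) ∧
      val g j x (t - p - 1 - m) (p + 1 + m) i = true} =
      ⋃ m : ℕ, ({x : ℤ → Fin n → ℝ | Wc g j x (t - p - 1 - m)} ∩
        ((fun x : ℤ → Fin n → ℝ => val g j x (t - p - 1 - m) (p + 1 + m) i) ⁻¹' {true})) := by
    ext x
    simp only [Set.mem_setOf_eq, Set.mem_iUnion, Set.mem_inter_iff, Set.mem_preimage,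
      Set.mem_singleton_iff]
  rw [hset]
  refine MeasurableSet.iUnion fun m => (measurableSet_Wc g j hg _).inter ?_
  exact ((measurable_pi_apply i).comp (measurable_val g j hg _ _)) (measurableSet_singleton true)

end aux


/-- Existence, uniqueness, Bernoulli-shift representation and joint ergodicity of the
stationary solution of `Y_{i,t} = 1_{g_i(Y_{t−1},…,Y_{t−p},ζ_t) > 0}`, under a
coalescence-type condition on `g`. -/
theorem stmt12 {Ω : Type*} [MeasurableSpace Ω] (μ : Measure Ω) [IsProbabilityMeasure μ]
    (n k p : ℕ) (ζ : ℤ → Ω → (Fin n → ℝ)) (hζmeas : ∀ t, Measurable (ζ t))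
    (hζ : IsStatErg μ ζ)
    (g : (Fin p → Fin k → Bool) → (Fin n → ℝ) → Fin k → ℝ)
    (hg : Measurable fun q : (Fin p → Fin k → Bool) × (Fin n → ℝ) => g q.1 q.2)
    (j : Fin k → Bool)
    (hA2 : 0 < μ {ω | ∀ t : ℤ, 1 ≤ t → t ≤ (p : ℤ) →
        ∀ y : Fin p → Fin k → Bool, ∀ i : Fin k, decide (0 < g y (ζ t ω) i) = j i}) :
    ∃ Y : ℤ → Ω → (Fin k → Bool),
      (∀ t, Measurable (Y t)) ∧
      IsStatErg μ Y ∧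
      (∀ t : ℤ, ∀ᵐ ω ∂μ, ∀ i : Fin k,
        Y t ω i = decide (0 < g (fun l : Fin p => Y (t - 1 - (l : ℕ)) ω) (ζ t ω) i)) ∧
      (∀ Y' : ℤ → Ω → (Fin k → Bool),
        (∀ t, Measurable (Y' t)) → IsStatErg μ Y' →
        (∀ t : ℤ, ∀ᵐ ω ∂μ, ∀ i : Fin k,
          Y' t ω i = decide (0 < g (fun l : Fin p => Y' (t - 1 - (l : ℕ)) ω) (ζ t ω) i)) →
        ∀ t : ℤ, ∀ᵐ ω ∂μ, Y t ω = Y' t ω) ∧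
      (∃ H : (ℕ → Fin n → ℝ) → (Fin k → Bool), Measurable H ∧
        ∀ t : ℤ, ∀ᵐ ω ∂μ, Y t ω = H fun s : ℕ => ζ (t - s) ω) ∧
      IsStatErg μ (fun t ω => (Y t ω, ζ t ω)) := by
  classical
  have hpmmeas : Measurable (fun ω (t : ℤ) => ζ t ω) := measurable_pi_lambda _ fun u => hζmeas u
  have hprob : IsProbabilityMeasure (pathLaw μ ζ) :=
    Measure.isProbabilityMeasure_map hpmmeas.aemeasurable
  have hWmeas : ∀ s : ℤ, MeasurableSet {x : ℤ → Fin n → ℝ | Wc g j x s} :=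
    fun s => measurableSet_Wc g j hg s
  -- all window events have the same (positive) probability
  have hstep : ∀ s : ℤ, pathLaw μ ζ {x | Wc g j x (s + 1)} = pathLaw μ ζ {x | Wc g j x s} := by
    intro s
    have hpre : shiftZ ⁻¹' {x : ℤ → Fin n → ℝ | Wc g j x s} = {x | Wc g j x (s + 1)} := by
      ext x
      simp only [Set.mem_preimage, Set.mem_setOf_eq]
      exact Wc_shift g j x 1 s
    rw [← hpre]
    exact hζ.1.measure_preimage (hWmeas s).nullMeasurableSet
  have hWν : ∀ s : ℤ, pathLaw μ ζ {x | Wc g j x s} = pathLaw μ ζ {x | Wc g j x 0} := by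
    intro s
    induction s using Int.induction_on with
    | zero => rfl
    | succ i ih => rw [hstep (i : ℤ)]; exact ih
    | pred i ih =>
      have h2 := hstep (-(i : ℤ) - 1)
      rw [show -(i : ℤ) - 1 + 1 = -(i : ℤ) by ring] at h2
      rw [← h2]
      exact ih
  have hCpos : 0 < pathLaw μ ζ {x : ℤ → Fin n → ℝ | Wc g j x 0} := by
    have hmap : pathLaw μ ζ {x : ℤ → Fin n → ℝ | Wc g j x 0}
        = μ ((fun ω (t : ℤ) => ζ t ω) ⁻¹' {x | Wc g j x 0}) :=
      Measure.map_apply hpmmeas (hWmeas 0)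
    have hpre : (fun ω (t : ℤ) => ζ t ω) ⁻¹' {x : ℤ → Fin n → ℝ | Wc g j x 0}
        = {ω | ∀ t : ℤ, 1 ≤ t → t ≤ (p : ℤ) → ∀ y : Fin p → Fin k → Bool, ∀ i : Fin k,
            decide (0 < g y (ζ t ω) i) = j i} := by
      ext ω
      simp only [Set.mem_preimage, Set.mem_setOf_eq, Wc]
      constructor
      · intro h t h1 h2 y i
        have h3 := h t h1 h2 y i
        rwa [zero_add] at h3
      · intro h t h1 h2 y i
        rw [zero_add]
        exact h t h1 h2 y i
    rw [hmap, hpre]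
    exact hA2
  -- the set of good paths has full measure
  have hDmeas : MeasurableSet {x : ℤ → Fin n → ℝ | ∀ t : ℤ, ∃ m : ℕ, Wc g j x (t - p - 1 - m)} := by
    have h1 : {x : ℤ → Fin n → ℝ | ∀ t : ℤ, ∃ m : ℕ, Wc g j x (t - p - 1 - m)}
        = ⋂ t : ℤ, ⋃ m : ℕ, {x | Wc g j x (t - p - 1 - m)} := by
      ext x
      simp only [Set.mem_setOf_eq, Set.mem_iInter, Set.mem_iUnion]
    rw [h1]
    exact MeasurableSet.iInter fun t => MeasurableSet.iUnion fun m => hWmeas _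
  have hDinv : shiftZ ⁻¹' {x : ℤ → Fin n → ℝ | ∀ t : ℤ, ∃ m : ℕ, Wc g j x (t - p - 1 - m)}
      = {x : ℤ → Fin n → ℝ | ∀ t : ℤ, ∃ m : ℕ, Wc g j x (t - p - 1 - m)} := by
    ext x
    simp only [Set.mem_preimage, Set.mem_setOf_eq]
    constructor
    · intro h t
      obtain ⟨m, hm⟩ := h (t - 1)
      have h3 := (Wc_shift g j x 1 _).mp hm
      exact ⟨m, by rwa [show t - 1 - (p : ℤ) - 1 - (m : ℤ) + 1 = t - p - 1 - m by ring] at h3⟩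
    · intro h t
      obtain ⟨m, hm⟩ := h (t + 1)
      refine ⟨m, (Wc_shift g j x 1 _).mpr ?_⟩
      rwa [show t - (p : ℤ) - 1 - (m : ℤ) + 1 = t + 1 - p - 1 - m by ring]
  have hEmeas : ∀ N : ℕ,
      MeasurableSet {x : ℤ → Fin n → ℝ | ∃ m : ℕ, Wc g j x (-(N : ℤ) - p - 1 - m)} := by
    intro N
    have h1 : {x : ℤ → Fin n → ℝ | ∃ m : ℕ, Wc g j x (-(N : ℤ) - p - 1 - m)}
        = ⋃ m : ℕ, {x | Wc g j x (-(N : ℤ) - p - 1 - m)} := by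
      ext x
      simp only [Set.mem_setOf_eq, Set.mem_iUnion]
    rw [h1]
    exact MeasurableSet.iUnion fun m => hWmeas _
  have hEanti : Antitone (fun N : ℕ =>
      {x : ℤ → Fin n → ℝ | ∃ m : ℕ, Wc g j x (-(N : ℤ) - p - 1 - m)}) := by
    apply antitone_nat_of_succ_le
    intro N x hx
    obtain ⟨m, hm⟩ := hx
    exact ⟨m + 1, by
      rwa [show -(N : ℤ) - p - 1 - ((m + 1 : ℕ) : ℤ) = -((N + 1 : ℕ) : ℤ) - p - 1 - (m : ℤ) by
        push_cast; ring]⟩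
  have hDeqN : {x : ℤ → Fin n → ℝ | ∀ t : ℤ, ∃ m : ℕ, Wc g j x (t - p - 1 - m)}
      = ⋂ N : ℕ, {x : ℤ → Fin n → ℝ | ∃ m : ℕ, Wc g j x (-(N : ℤ) - p - 1 - m)} := by
    ext x
    simp only [Set.mem_setOf_eq, Set.mem_iInter]
    constructor
    · intro h N
      exact h (-(N : ℤ))
    · intro h t
      obtain ⟨m, hm⟩ := h ((-t).toNat)
      refine ⟨m + (t + ((-t).toNat : ℤ)).toNat, ?_⟩
      rwa [show t - (p : ℤ) - 1 - ((m + (t + ((-t).toNat : ℤ)).toNat : ℕ) : ℤ)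
        = -(((-t).toNat : ℕ) : ℤ) - p - 1 - (m : ℤ) by omega]
  have htend := tendsto_measure_iInter_atTop (μ := pathLaw μ ζ)
    (fun N => (hEmeas N).nullMeasurableSet) hEanti ⟨0, measure_ne_top _ _⟩
  have hge : ∀ N : ℕ, pathLaw μ ζ {x : ℤ → Fin n → ℝ | Wc g j x 0}
      ≤ pathLaw μ ζ {x : ℤ → Fin n → ℝ | ∃ m : ℕ, Wc g j x (-(N : ℤ) - p - 1 - m)} := by
    intro N
    rw [← hWν (-(N : ℤ) - p - 1)]
    apply measure_mono
    intro x hx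
    exact ⟨0, by rwa [show -(N : ℤ) - p - 1 - ((0 : ℕ) : ℤ) = -(N : ℤ) - p - 1 by simp]⟩
  have hD1 : pathLaw μ ζ {x : ℤ → Fin n → ℝ | ∀ t : ℤ, ∃ m : ℕ, Wc g j x (t - p - 1 - m)} = 1 := by
    rcases hζ.2 _ hDmeas hDinv with h0 | h1
    · exfalso
      have hDge : pathLaw μ ζ {x : ℤ → Fin n → ℝ | Wc g j x 0}
          ≤ pathLaw μ ζ {x : ℤ → Fin n → ℝ | ∀ t : ℤ, ∃ m : ℕ, Wc g j x (t - p - 1 - m)} := by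
        rw [hDeqN]
        exact ge_of_tendsto htend (Filter.Eventually.of_forall hge)
      rw [h0] at hDge
      exact absurd hDge (not_le.mpr hCpos)
    · exact h1
  have hDae : ∀ᵐ ω ∂μ, ∀ t : ℤ, ∃ m : ℕ, Wc g j (fun u => ζ u ω) (t - p - 1 - m) := by
    have hmap : pathLaw μ ζ {x : ℤ → Fin n → ℝ | ∀ t : ℤ, ∃ m : ℕ, Wc g j x (t - p - 1 - m)}
        = μ ((fun ω (t : ℤ) => ζ t ω) ⁻¹'
            {x : ℤ → Fin n → ℝ | ∀ t : ℤ, ∃ m : ℕ, Wc g j x (t - p - 1 - m)}) :=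
      Measure.map_apply hpmmeas hDmeas
    have h1 : μ ((fun ω (t : ℤ) => ζ t ω) ⁻¹'
        {x : ℤ → Fin n → ℝ | ∀ t : ℤ, ∃ m : ℕ, Wc g j x (t - p - 1 - m)}) = 1 := by
      rw [← hmap]
      exact hD1
    rw [ae_iff]
    have hc : {ω | ¬ ∀ t : ℤ, ∃ m : ℕ, Wc g j (fun u => ζ u ω) (t - p - 1 - m)}
        = ((fun ω (t : ℤ) => ζ t ω) ⁻¹'
            {x : ℤ → Fin n → ℝ | ∀ t : ℤ, ∃ m : ℕ, Wc g j x (t - p - 1 - m)})ᶜ := rfl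
    rw [hc, prob_compl_eq_zero_iff (hpmmeas hDmeas)]
    exact h1
  refine ⟨fun t ω => Yt g j (fun u => ζ u ω) t, ?_, ?_, ?_, ?_, ?_, ?_⟩
  · -- measurability
    intro t
    exact (measurable_Yt g j hg t).comp hpmmeas
  · -- stationarity and ergodicity
    have hΦY : Measurable fun (x : ℤ → Fin n → ℝ) (t : ℤ) => Yt g j x t :=
      measurable_pi_lambda _ fun t => measurable_Yt g j hg t
    have hcommY : ∀ x : ℤ → Fin n → ℝ,
        (fun t : ℤ => Yt g j (shiftZ x) t) = shiftZ (fun t : ℤ => Yt g j x t) := by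
      intro x
      funext t
      show Yt g j (shiftZ x) t = Yt g j x (t + 1)
      exact Yt_shift g j x 1 t
    have hfac := factor hζ.1 hζ.2 hΦY hcommY
    have hlawY : pathLaw μ (fun (t : ℤ) ω => Yt g j (fun u => ζ u ω) t)
        = Measure.map (fun (x : ℤ → Fin n → ℝ) (t : ℤ) => Yt g j x t) (pathLaw μ ζ) := by
      show Measure.map _ μ = Measure.map _ (Measure.map (fun ω (t : ℤ) => ζ t ω) μ)
      rw [Measure.map_map hΦY hpmmeas]
      rfl
    refine ⟨?_, ?_⟩
    · rw [hlawY]; exact hfac.1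
    · intro A hA hinv
      rw [hlawY]
      exact hfac.2 A hA hinv
  · -- the recursion
    intro t
    filter_upwards [hDae] with ω hω
    intro i
    exact Yt_rec g j hω t i
  · -- uniqueness
    intro Y' hY'meas hY'se hY'rec t
    have hrecall : ∀ᵐ ω ∂μ, ∀ τ : ℤ, ∀ i : Fin k,
        Y' τ ω i = decide (0 < g (fun l : Fin p => Y' (τ - 1 - (l : ℕ)) ω) (ζ τ ω) i) :=
      ae_all_iff.mpr hY'rec
    filter_upwards [hDae, hrecall] with ω hωD hωrec
    obtain ⟨m, hWm⟩ := hωD t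
    set s : ℤ := t - (p : ℤ) - 1 - (m : ℤ) with hsdef
    have hcl := val_unique g j (x := fun u => ζ u ω) (Z := fun τ => Y' τ ω) hωrec hWm
    have hd := hcl (p + m)
    rw [show s + 1 + ((p + m : ℕ) : ℤ) = t by omega] at hd
    have h2 : Yt g j (fun u => ζ u ω) t = val g j (fun u => ζ u ω) s ((t - s).toNat) :=
      Yt_eq_val g j hWm (by omega)
    rw [show (t - s).toNat = p + m + 1 by omega] at h2
    rw [h2, ← hd]
  · -- representation as a function of the past innovations
    refine ⟨fun w => Yt g j (fun u : ℤ => w (-u).toNat) 0, ?_, ?_⟩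
    · exact (measurable_Yt g j hg 0).comp (measurable_pi_lambda _ fun u => measurable_pi_apply _)
    · intro t
      apply Filter.Eventually.of_forall
      intro ω
      show Yt g j (fun u => ζ u ω) t
          = Yt g j (fun u : ℤ => ζ (t - (((-u).toNat : ℕ) : ℤ)) ω) 0
      have h1 : Yt g j (fun u : ℤ => ζ (u + t) ω) 0 = Yt g j (fun u : ℤ => ζ u ω) (0 + t) :=
        Yt_shift g j (fun u : ℤ => ζ u ω) t 0
      rw [zero_add] at h1
      rw [← h1]
      refine Yt_congr g j 0 ?_
      intro u hu
      rw [show u + t = t - (((-u).toNat : ℕ) : ℤ) by omega]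
  · -- joint stationarity and ergodicity
    have hΦJ : Measurable fun (x : ℤ → Fin n → ℝ) (t : ℤ) => (Yt g j x t, x t) :=
      measurable_pi_lambda _ fun t => (measurable_Yt g j hg t).prodMk (measurable_pi_apply t)
    have hcommJ : ∀ x : ℤ → Fin n → ℝ,
        (fun t : ℤ => (Yt g j (shiftZ x) t, shiftZ x t))
          = shiftZ (fun t : ℤ => (Yt g j x t, x t)) := by
      intro x
      funext t
      show (Yt g j (shiftZ x) t, x (t + 1)) = (Yt g j x (t + 1), x (t + 1))
      rw [show Yt g j (shiftZ x) t = Yt g j x (t + 1) from Yt_shift g j x 1 t]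
    have hfac := factor hζ.1 hζ.2 hΦJ hcommJ
    have hlawJ : pathLaw μ (fun (t : ℤ) ω => (Yt g j (fun u => ζ u ω) t, ζ t ω))
        = Measure.map (fun (x : ℤ → Fin n → ℝ) (t : ℤ) => (Yt g j x t, x t)) (pathLaw μ ζ) := by
      show Measure.map _ μ = Measure.map _ (Measure.map (fun ω (t : ℤ) => ζ t ω) μ)
      rw [Measure.map_map hΦJ hpmmeas]
      rfl
    refine ⟨?_, ?_⟩
    · rw [hlawJ]; exact hfac.1
    · intro A hA hinv
      rw [hlawJ]
      exact hfac.2 A hA hinv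
end

section
/- Let (V_j)_{j∈ℤ} be i.i.d. ℝ^{d₂}-valued, (η_t)_{t∈ℤ} i.i.d. ℝ^{d₃}-valued, and for each j ∈ ℤ let ((κ_{j,t}, ε_{j,t}))_{t∈ℤ} be an i.i.d. sequence with values in ℝ^{d₄} × ℝ^{k}, these sequences being i.i.d. across j; assume (V_j)_j, (η_t)_t and the family ((κ_{j,t}, ε_{j,t})_t)_j are mutually independent. Given a measurable map Ḡ : ℝ^{d₂} × (ℝ^{d₃+d₄+k})^ℕ → ℝ, define Z_{j,t} = Ḡ( V_j, ((η_{t−s}, κ_{j,t−s}, ε_{j,t−s}))_{s≥0} ). Then the law P_Z of the array (Z_{j,t})_{(j,t)∈ℤ²} on ℝ^{ℤ×ℤ} is invariant under the two shifts τ₁ : (x_{j,t}) ↦ (x_{j+1,t}) and τ₂ : (x_{j,t}) ↦ (x_{j,t+1}), and every measurable set A ⊆ ℝ^{ℤ×ℤ} with τ₁^{−1}(A) = A and τ₂^{−1}(A) = A satisfies P_Z(A) ∈ {0,1}. -/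
open MeasureTheory ProbabilityTheory
open scoped symmDiff



section Aux

variable {Ω : Type*} [MeasurableSpace Ω] {μ : Measure Ω}

/-- Reindexing an independent family along an injective map preserves independence. -/
lemma aux_iIndepFun_precomp {ι ι' γ : Type*} [MeasurableSpace γ]
    {f : ι → Ω → γ} (h : iIndepFun f μ)
    {e : ι' → ι} (he : Function.Injective e) :
    iIndepFun (fun i => f (e i)) μ := by
  rw [iIndepFun_iff_measure_inter_preimage_eq_mul] at h ⊢
  intro S sets hsets
  rcases S.eq_empty_or_nonempty with rfl | ⟨i₀, hi₀⟩
  · have := h (∅ : Finset ι) (sets := fun _ => (Set.univ : Set γ)) (by simp)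
    simpa using this
  haveI : Nonempty ι' := ⟨i₀⟩
  classical
  set sets' : ι → Set γ := fun i => sets (Function.invFun e i) with hsets'
  have hkey : ∀ i' : ι', sets' (e i') = sets i' := fun i' => by
    simp only [hsets', Function.leftInverse_invFun he i']
  have hmeas : ∀ i ∈ S.map ⟨e, he⟩, MeasurableSet (sets' i) := by
    intro i hi
    obtain ⟨i', hi', rfl⟩ := Finset.mem_map.mp hi
    exact hkey i' ▸ hsets i' hi'
  have := h (S.map ⟨e, he⟩) hmeas
  rw [Finset.prod_map] at this
  have hInter : (⋂ i ∈ S.map ⟨e, he⟩, f i ⁻¹' sets' i)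
      = ⋂ i' ∈ S, f (e i') ⁻¹' sets i' := by
    ext x
    simp only [Set.mem_iInter, Finset.mem_map, Function.Embedding.coeFn_mk]
    constructor
    · intro hx i' hi'
      have := hx (e i') ⟨i', hi', rfl⟩
      rwa [hkey i'] at this
    · rintro hx i ⟨i', hi', rfl⟩
      rw [hkey i']
      exact hx i' hi'
  rw [hInter] at this
  rw [this]
  refine Finset.prod_congr rfl fun i' hi' => ?_
  simp only [Function.Embedding.coeFn_mk, hkey i']

/-- The joint law of finitely many independent random variables is the product
of the marginals. -/
lemma aux_map_bundle_pi {ι γ : Type*} [Fintype ι] [MeasurableSpace γ]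
    {f : ι → Ω → γ} (h : iIndepFun f μ)
    (hm : ∀ i, Measurable (f i)) :
    μ.map (fun ω i => f i ω) = Measure.pi (fun i => μ.map (f i)) := by
  haveI : IsProbabilityMeasure μ := h.isProbabilityMeasure
  haveI : ∀ i, IsProbabilityMeasure (μ.map (f i)) :=
    fun i => Measure.isProbabilityMeasure_map (hm i).aemeasurable
  refine (Measure.pi_eq fun s hs => ?_).symm
  rw [Measure.map_apply (measurable_pi_lambda _ fun i => hm i) (MeasurableSet.univ_pi hs)]
  have hpre : (fun ω i => f i ω) ⁻¹' (Set.univ.pi s) = ⋂ i, f i ⁻¹' s i := by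
    ext ω; simp [Set.mem_pi]
  rw [hpre]
  have := h.measure_inter_preimage_eq_mul Finset.univ (fun i _ => hs i)
  simp only [Finset.mem_univ, Set.iInter_true] at this
  rw [this]
  refine Finset.prod_congr rfl fun i _ => ?_
  rw [Measure.map_apply (hm i) (hs i)]

/-- Two independent families with equal marginal laws have identically
distributed bundles. -/
lemma aux_map_bundle_eq {ι γ : Type*} [MeasurableSpace γ]
    {f g : ι → Ω → γ}
    (hf : iIndepFun f μ)
    (hg : iIndepFun g μ)
    (hfm : ∀ i, Measurable (f i)) (hgm : ∀ i, Measurable (g i))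
    (hmarg : ∀ i, μ.map (f i) = μ.map (g i)) :
    μ.map (fun ω i => f i ω) = μ.map (fun ω i => g i ω) := by
  haveI : IsProbabilityMeasure μ := hf.isProbabilityMeasure
  have hbf : Measurable (fun ω (i : ι) => f i ω) := measurable_pi_lambda _ fun i => hfm i
  have hbg : Measurable (fun ω (i : ι) => g i ω) := measurable_pi_lambda _ fun i => hgm i
  haveI : IsProbabilityMeasure (μ.map (fun ω (i : ι) => f i ω)) :=
    Measure.isProbabilityMeasure_map hbf.aemeasurable
  haveI : IsProbabilityMeasure (μ.map (fun ω (i : ι) => g i ω)) :=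
    Measure.isProbabilityMeasure_map hbg.aemeasurable
  refine ext_of_generate_finite (measurableCylinders (fun _ : ι => γ))
    generateFrom_measurableCylinders.symm isPiSystem_measurableCylinders
    (fun t ht => ?_) (by simp)
  obtain ⟨s, S, hS, rfl⟩ := (mem_measurableCylinders _).mp ht
  rw [Measure.map_apply hbf (hS.cylinder s), Measure.map_apply hbg (hS.cylinder s)]
  have h1 : (fun ω (i : ι) => f i ω) ⁻¹' cylinder s S
      = (fun ω (i : s) => f i ω) ⁻¹' S := rfl
  have h2 : (fun ω (i : ι) => g i ω) ⁻¹' cylinder s S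
      = (fun ω (i : s) => g i ω) ⁻¹' S := rfl
  rw [h1, h2,
    ← Measure.map_apply (measurable_pi_lambda _ fun i : s => hfm i) hS,
    ← Measure.map_apply (measurable_pi_lambda _ fun i : s => hgm i) hS,
    aux_map_bundle_pi (aux_iIndepFun_precomp hf Subtype.coe_injective) (fun i : s => hfm i),
    aux_map_bundle_pi (aux_iIndepFun_precomp hg Subtype.coe_injective) (fun i : s => hgm i)]
  have : (fun i : s => μ.map (f (↑i))) = fun i : s => μ.map (g (↑i)) :=
    funext fun i => hmarg i
  rw [this]

/-- Gluing two independent families which are independent of each other. -/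
lemma aux_glue {ι₁ ι₂ γ : Type*} [MeasurableSpace γ]
    {f : ι₁ → Ω → γ} {g : ι₂ → Ω → γ}
    (hf : iIndepFun f μ)
    (hg : iIndepFun g μ)
    (hfm : ∀ i, Measurable (f i)) (hgm : ∀ i, Measurable (g i))
    (hfg : IndepFun (fun ω i => f i ω) (fun ω i => g i ω) μ) :
    iIndepFun (Sum.elim f g) μ := by
  rw [iIndepFun_iff_measure_inter_preimage_eq_mul]
  intro S sets hsets
  classical
  set TL : Set (ι₁ → γ) := ⋂ a ∈ S.toLeft, (fun x : ι₁ → γ => x a) ⁻¹' sets (.inl a) with hTL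
  set TR : Set (ι₂ → γ) := ⋂ b ∈ S.toRight, (fun x : ι₂ → γ => x b) ⁻¹' sets (.inr b) with hTR
  have hTLm : MeasurableSet TL :=
    MeasurableSet.biInter S.toLeft.countable_toSet fun a ha =>
      (measurable_pi_apply a) (hsets _ (Finset.mem_toLeft.mp ha))
  have hTRm : MeasurableSet TR :=
    MeasurableSet.biInter S.toRight.countable_toSet fun b hb =>
      (measurable_pi_apply b) (hsets _ (Finset.mem_toRight.mp hb))
  have hsplit : (⋂ i ∈ S, Sum.elim f g i ⁻¹' sets i) =
      ((fun ω i => f i ω) ⁻¹' TL) ∩ ((fun ω i => g i ω) ⁻¹' TR) := by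
    ext ω
    simp only [hTL, hTR, Set.mem_iInter, Set.mem_inter_iff, Set.mem_preimage,
      Finset.mem_toLeft, Finset.mem_toRight]
    constructor
    · exact fun h => ⟨fun a ha => h _ ha, fun b hb => h _ hb⟩
    · rintro ⟨h1, h2⟩ (a | b) hi
      · exact h1 a hi
      · exact h2 b hi
  have hL : μ ((fun ω i => f i ω) ⁻¹' TL) = ∏ a ∈ S.toLeft, μ (f a ⁻¹' sets (.inl a)) := by
    have : (fun ω (i : ι₁) => f i ω) ⁻¹' TL = ⋂ a ∈ S.toLeft, f a ⁻¹' sets (.inl a) := by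
      ext ω; simp [hTL]
    rw [this]
    exact hf.measure_inter_preimage_eq_mul S.toLeft
      (fun a ha => hsets _ (Finset.mem_toLeft.mp ha))
  have hR : μ ((fun ω i => g i ω) ⁻¹' TR) = ∏ b ∈ S.toRight, μ (g b ⁻¹' sets (.inr b)) := by
    have : (fun ω (i : ι₂) => g i ω) ⁻¹' TR = ⋂ b ∈ S.toRight, g b ⁻¹' sets (.inr b) := by
      ext ω; simp [hTR]
    rw [this]
    exact hg.measure_inter_preimage_eq_mul S.toRight
      (fun b hb => hsets _ (Finset.mem_toRight.mp hb))
  have hprod : ∏ i ∈ S, μ (Sum.elim f g i ⁻¹' sets i)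
      = (∏ a ∈ S.toLeft, μ (f a ⁻¹' sets (.inl a)))
        * ∏ b ∈ S.toRight, μ (g b ⁻¹' sets (.inr b)) := by
    calc ∏ i ∈ S, μ (Sum.elim f g i ⁻¹' sets i)
        = ∏ i ∈ S.toLeft.disjSum S.toRight,
            Sum.elim (fun a => μ (f a ⁻¹' sets (.inl a)))
              (fun b => μ (g b ⁻¹' sets (.inr b))) i := by
          rw [Finset.toLeft_disjSum_toRight]
          exact Finset.prod_congr rfl fun i _ => by cases i <;> rfl
      _ = _ := Finset.prod_sumElim _ _ _ _
  rw [hsplit, hfg.measure_inter_preimage_eq_mul TL TR hTLm hTRm, hL, hR, hprod]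

end Aux

/-- Shift of the combined index in the `j` direction. -/
def s17shJ : (ℤ ⊕ ℤ ⊕ ℤ × ℤ) → (ℤ ⊕ ℤ ⊕ ℤ × ℤ)
  | .inl j => .inl (j + 1)
  | .inr (.inl t) => .inr (.inl t)
  | .inr (.inr (j, t)) => .inr (.inr (j + 1, t))

/-- Shift of the combined index in the `t` direction. -/
def s17shT : (ℤ ⊕ ℤ ⊕ ℤ × ℤ) → (ℤ ⊕ ℤ ⊕ ℤ × ℤ)
  | .inl j => .inl j
  | .inr (.inl t) => .inr (.inl (t + 1))
  | .inr (.inr (j, t)) => .inr (.inr (j, t + 1))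

/-- Shift of the combined index by `n` in both directions. -/
def s17shB (n : ℤ) : (ℤ ⊕ ℤ ⊕ ℤ × ℤ) → (ℤ ⊕ ℤ ⊕ ℤ × ℤ)
  | .inl j => .inl (j + n)
  | .inr (.inl t) => .inr (.inl (t + n))
  | .inr (.inr (j, t)) => .inr (.inr (j + n, t + n))

/-- Size bound of a combined index. -/
def s17bnd : (ℤ ⊕ ℤ ⊕ ℤ × ℤ) → ℕ
  | .inl j => j.natAbs
  | .inr (.inl t) => t.natAbs
  | .inr (.inr (j, t)) => max j.natAbs t.natAbs

lemma s17shJ_inj : Function.Injective s17shJ := by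
  rintro (j | t | ⟨j, t⟩) (j' | t' | ⟨j', t'⟩) h <;>
    simp only [s17shJ, Sum.inl.injEq, Sum.inr.injEq, Prod.mk.injEq] at h <;> simp_all <;> omega

lemma s17shT_inj : Function.Injective s17shT := by
  rintro (j | t | ⟨j, t⟩) (j' | t' | ⟨j', t'⟩) h <;>
    simp only [s17shT, Sum.inl.injEq, Sum.inr.injEq, Prod.mk.injEq] at h <;> simp_all <;> omega

lemma s17_iter (n : ℕ) : (s17shT ∘ s17shJ)^[n] = s17shB n := by
  induction n with
  | zero => funext i; rcases i with j | t | ⟨j, t⟩ <;> simp [s17shB]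
  | succ n ih =>
      rw [Function.iterate_succ', ih]
      funext i
      rcases i with j | t | ⟨j, t⟩ <;>
        simp only [s17shB, s17shT, s17shJ, Function.comp_apply, Sum.inl.injEq, Sum.inr.injEq,
          Prod.mk.injEq] <;> push_cast <;> omega


lemma s17arith {q d r ε : ℝ} (hq0 : 0 ≤ q) (hq1 : q ≤ 1) (hd0 : 0 ≤ d) (hd1 : d ≤ 1)
    (hε : 0 < ε) (hqd : |q - d| ≤ ε) (hqr : |q - r| ≤ ε + ε) (hr : r = d * d) :
    |q - q * q| ≤ 4 * ε := by
  have h1 := abs_le.mp hqd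
  have h2 := abs_le.mp hqr
  have hub : (d - q) * (d + q) ≤ ε * 2 := by nlinarith
  have hlb : -(ε * 2) ≤ (d - q) * (d + q) := by nlinarith
  have hiden : q - q * q = (q - r) + (d - q) * (d + q) := by rw [hr]; ring
  rw [abs_le]
  constructor
  · rw [hiden]; linarith [h2.1]
  · rw [hiden]; linarith [h2.2]

/-- Bernoulli-shift array driven by individual effects `V_j`, common shocks `η_t` and
idiosyncratic shocks `(κ_{j,t}, ε_{j,t})`: the law `P_Z` of
`Z_{j,t} = Ḡ(V_j, ((η_{t−s}, κ_{j,t−s}, ε_{j,t−s}))_{s≥0})` on `ℝ^{ℤ×ℤ}` is invariant under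
both shifts `τ₁, τ₂`, and every set invariant under both shifts has `P_Z`-measure `0` or `1`. -/
theorem stmt17 {Ω : Type*} [MeasurableSpace Ω] (μ : Measure Ω) [IsProbabilityMeasure μ]
    (d₂ d₃ d₄ k : ℕ)
    (V : ℤ → Ω → Fin d₂ → ℝ) (η : ℤ → Ω → Fin d₃ → ℝ)
    (κε : ℤ → ℤ → Ω → (Fin d₄ → ℝ) × (Fin k → ℝ))
    (hVmeas : ∀ j, Measurable (V j)) (hηmeas : ∀ t, Measurable (η t))
    (hκεmeas : ∀ j t, Measurable (κε j t))
    -- `(V_j)_{j∈ℤ}` is i.i.d.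
    (hVindep : iIndepFun V μ)
    (hVident : ∀ j : ℤ, IdentDistrib (V j) (V 0) μ μ)
    -- `(η_t)_{t∈ℤ}` is i.i.d.
    (hηindep : iIndepFun η μ)
    (hηident : ∀ t : ℤ, IdentDistrib (η t) (η 0) μ μ)
    -- `((κ_{j,t}, ε_{j,t}))_{t∈ℤ}` is i.i.d. in `t` and i.i.d. across `j`
    (hκεindep : iIndepFun
      (fun jt : ℤ × ℤ => κε jt.1 jt.2) μ)
    (hκεident : ∀ j t : ℤ, IdentDistrib (κε j t) (κε 0 0) μ μ)
    -- mutual independence of the three families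
    (hindep23 : IndepFun (fun ω (t : ℤ) => η t ω)
      (fun ω (jt : ℤ × ℤ) => κε jt.1 jt.2 ω) μ)
    (hindep1_23 : IndepFun (fun ω (j : ℤ) => V j ω)
      (fun ω => ((fun t : ℤ => η t ω), (fun jt : ℤ × ℤ => κε jt.1 jt.2 ω))) μ)
    (G : (Fin d₂ → ℝ) × (ℕ → (Fin d₃ → ℝ) × (Fin d₄ → ℝ) × (Fin k → ℝ)) → ℝ)
    (hG : Measurable G)
    (Z : ℤ → ℤ → Ω → ℝ)
    (hZ : ∀ j t ω, Z j t ω =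
      G (V j ω, fun s : ℕ => (η (t - s) ω, (κε j (t - s) ω).1, (κε j (t - s) ω).2))) :
    MeasurePreserving (fun (x : ℤ → ℤ → ℝ) (j t : ℤ) => x (j + 1) t)
        (Measure.map (fun ω (j t : ℤ) => Z j t ω) μ)
        (Measure.map (fun ω (j t : ℤ) => Z j t ω) μ) ∧
    MeasurePreserving (fun (x : ℤ → ℤ → ℝ) (j t : ℤ) => x j (t + 1))
        (Measure.map (fun ω (j t : ℤ) => Z j t ω) μ)
        (Measure.map (fun ω (j t : ℤ) => Z j t ω) μ) ∧
    ∀ A : Set (ℤ → ℤ → ℝ), MeasurableSet A →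
      (fun (x : ℤ → ℤ → ℝ) (j t : ℤ) => x (j + 1) t) ⁻¹' A = A →
      (fun (x : ℤ → ℤ → ℝ) (j t : ℤ) => x j (t + 1)) ⁻¹' A = A →
      Measure.map (fun ω (j t : ℤ) => Z j t ω) μ A = 0 ∨
      Measure.map (fun ω (j t : ℤ) => Z j t ω) μ A = 1 := by
  classical
  -- the combined family of driving random variables, with common codomain `γ`
  let Y : (ℤ ⊕ ℤ ⊕ ℤ × ℤ) → Ω →
      (Fin d₂ → ℝ) × (Fin d₃ → ℝ) × (Fin d₄ → ℝ) × (Fin k → ℝ) :=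
    Sum.elim (fun j ω => (V j ω, 0, 0, 0))
      (Sum.elim (fun t ω => (0, η t ω, 0, 0)) (fun p ω => (0, 0, κε p.1 p.2 ω)))
  have hYmeas : ∀ i, Measurable (Y i) := by
    rintro (j | t | ⟨j, t⟩)
    · exact (hVmeas j).prodMk measurable_const
    · exact measurable_const.prodMk ((hηmeas t).prodMk measurable_const)
    · exact measurable_const.prodMk (measurable_const.prodMk (hκεmeas j t))
  -- the combined family is jointly independent
  have hY1 : iIndepFun
      (fun j (ω : Ω) => ((V j ω, 0, 0, 0) :
        (Fin d₂ → ℝ) × (Fin d₃ → ℝ) × (Fin d₄ → ℝ) × (Fin k → ℝ))) μ :=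
    hVindep.comp (fun _ v => (v, 0, 0, 0))
      (fun _ => measurable_id.prodMk measurable_const)
  have hY2 : iIndepFun
      (fun t (ω : Ω) => ((0, η t ω, 0, 0) :
        (Fin d₂ → ℝ) × (Fin d₃ → ℝ) × (Fin d₄ → ℝ) × (Fin k → ℝ))) μ :=
    hηindep.comp (fun _ b => (0, b, 0, 0))
      (fun _ => measurable_const.prodMk (measurable_id.prodMk measurable_const))
  have hY3 : iIndepFun
      (fun (p : ℤ × ℤ) (ω : Ω) => ((0, 0, κε p.1 p.2 ω) :
        (Fin d₂ → ℝ) × (Fin d₃ → ℝ) × (Fin d₄ → ℝ) × (Fin k → ℝ))) μ :=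
    hκεindep.comp (fun _ c => (0, 0, c))
      (fun _ => measurable_const.prodMk (measurable_const.prodMk measurable_id))
  have hind23' : IndepFun
      (fun ω (t : ℤ) => ((0, η t ω, 0, 0) :
        (Fin d₂ → ℝ) × (Fin d₃ → ℝ) × (Fin d₄ → ℝ) × (Fin k → ℝ)))
      (fun ω (p : ℤ × ℤ) => ((0, 0, κε p.1 p.2 ω) :
        (Fin d₂ → ℝ) × (Fin d₃ → ℝ) × (Fin d₄ → ℝ) × (Fin k → ℝ))) μ :=
    hindep23.comp
      (measurable_pi_lambda _ fun t => measurable_const.prodMk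
        ((measurable_pi_apply t).prodMk measurable_const))
      (measurable_pi_lambda _ fun p => measurable_const.prodMk
        (measurable_const.prodMk (measurable_pi_apply p)))
  have hW : iIndepFun
      (Sum.elim
        (fun t (ω : Ω) => ((0, η t ω, 0, 0) :
          (Fin d₂ → ℝ) × (Fin d₃ → ℝ) × (Fin d₄ → ℝ) × (Fin k → ℝ)))
        (fun (p : ℤ × ℤ) (ω : Ω) => ((0, 0, κε p.1 p.2 ω) :
          (Fin d₂ → ℝ) × (Fin d₃ → ℝ) × (Fin d₄ → ℝ) × (Fin k → ℝ)))) μ :=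
    aux_glue hY2 hY3
      (fun t => measurable_const.prodMk ((hηmeas t).prodMk measurable_const))
      (fun (p : ℤ × ℤ) => measurable_const.prodMk (measurable_const.prodMk (hκεmeas p.1 p.2)))
      hind23'
  have hind1_23' : IndepFun
      (fun ω (j : ℤ) => ((V j ω, 0, 0, 0) :
        (Fin d₂ → ℝ) × (Fin d₃ → ℝ) × (Fin d₄ → ℝ) × (Fin k → ℝ)))
      (fun ω (i : ℤ ⊕ ℤ × ℤ) =>
        Sum.elim
          (fun t (ω : Ω) => ((0, η t ω, 0, 0) :
            (Fin d₂ → ℝ) × (Fin d₃ → ℝ) × (Fin d₄ → ℝ) × (Fin k → ℝ)))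
          (fun p (ω : Ω) => ((0, 0, κε p.1 p.2 ω) :
            (Fin d₂ → ℝ) × (Fin d₃ → ℝ) × (Fin d₄ → ℝ) × (Fin k → ℝ))) i ω) μ := by
    have hψ : Measurable (fun (p : (ℤ → Fin d₃ → ℝ) × (ℤ × ℤ → (Fin d₄ → ℝ) × (Fin k → ℝ)))
        (i : ℤ ⊕ ℤ × ℤ) =>
        Sum.elim (fun t => ((0, p.1 t, 0, 0) :
            (Fin d₂ → ℝ) × (Fin d₃ → ℝ) × (Fin d₄ → ℝ) × (Fin k → ℝ)))
          (fun q => ((0, 0, p.2 q) :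
            (Fin d₂ → ℝ) × (Fin d₃ → ℝ) × (Fin d₄ → ℝ) × (Fin k → ℝ))) i) := by
      refine measurable_pi_lambda _ ?_
      rintro (t | q)
      · exact measurable_const.prodMk
          (((measurable_pi_apply t).comp measurable_fst).prodMk measurable_const)
      · exact measurable_const.prodMk
          (measurable_const.prodMk ((measurable_pi_apply q).comp measurable_snd))
    have hφ : Measurable (fun (v : ℤ → Fin d₂ → ℝ) (j : ℤ) =>
        ((v j, 0, 0, 0) :
          (Fin d₂ → ℝ) × (Fin d₃ → ℝ) × (Fin d₄ → ℝ) × (Fin k → ℝ))) :=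
      measurable_pi_lambda _ fun j =>
        (measurable_pi_apply j).prodMk measurable_const
    have h := hindep1_23.comp hφ hψ
    have heq : ∀ ω (i : ℤ ⊕ ℤ × ℤ),
        Sum.elim
          (fun t (ω : Ω) => ((0, η t ω, 0, 0) :
            (Fin d₂ → ℝ) × (Fin d₃ → ℝ) × (Fin d₄ → ℝ) × (Fin k → ℝ)))
          (fun p (ω : Ω) => ((0, 0, κε p.1 p.2 ω) :
            (Fin d₂ → ℝ) × (Fin d₃ → ℝ) × (Fin d₄ → ℝ) × (Fin k → ℝ))) i ω
        = Sum.elim (fun t => ((0, η t ω, 0, 0) : _))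
            (fun q => ((0, 0, κε q.1 q.2 ω) : _)) i := by
      rintro ω (t | q) <;> rfl
    convert h using 1
    · rfl
    funext ω
    funext i
    exact heq ω i
  have hY : iIndepFun Y μ :=
    aux_glue hY1 hW (fun j => (hVmeas j).prodMk measurable_const)
      (by rintro (t | q)
          · exact measurable_const.prodMk ((hηmeas t).prodMk measurable_const)
          · exact measurable_const.prodMk (measurable_const.prodMk (hκεmeas q.1 q.2)))
      hind1_23'
  -- bundle map and its law
  have hΨmeas : Measurable (fun ω (i : ℤ ⊕ ℤ ⊕ ℤ × ℤ) => Y i ω) :=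
    measurable_pi_lambda _ hYmeas
  set Q := μ.map (fun ω (i : ℤ ⊕ ℤ ⊕ ℤ × ℤ) => Y i ω) with hQdef
  haveI hQprob : IsProbabilityMeasure Q := Measure.isProbabilityMeasure_map hΨmeas.aemeasurable
  -- marginal invariance under the two index shifts
  have hmargJ : ∀ i, μ.map (Y (s17shJ i)) = μ.map (Y i) := by
    rintro (j | t | ⟨j, t⟩)
    · exact (((hVident (j + 1)).trans (hVident j).symm).comp
        (show Measurable fun v : Fin d₂ → ℝ =>
            ((v, 0, 0, 0) : (Fin d₂ → ℝ) × (Fin d₃ → ℝ) × (Fin d₄ → ℝ) × (Fin k → ℝ)) from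
          measurable_id.prodMk measurable_const)).map_eq
    · rfl
    · exact (((hκεident (j + 1) t).trans (hκεident j t).symm).comp
        (show Measurable fun c : (Fin d₄ → ℝ) × (Fin k → ℝ) =>
            ((0, 0, c) : (Fin d₂ → ℝ) × (Fin d₃ → ℝ) × (Fin d₄ → ℝ) × (Fin k → ℝ)) from
          measurable_const.prodMk (measurable_const.prodMk measurable_id))).map_eq
  have hmargT : ∀ i, μ.map (Y (s17shT i)) = μ.map (Y i) := by
    rintro (j | t | ⟨j, t⟩)
    · rfl
    · exact (((hηident (t + 1)).trans (hηident t).symm).comp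
        (show Measurable fun b : Fin d₃ → ℝ =>
            ((0, b, 0, 0) : (Fin d₂ → ℝ) × (Fin d₃ → ℝ) × (Fin d₄ → ℝ) × (Fin k → ℝ)) from
          measurable_const.prodMk (measurable_id.prodMk measurable_const))).map_eq
    · exact (((hκεident j (t + 1)).trans (hκεident j t).symm).comp
        (show Measurable fun c : (Fin d₄ → ℝ) × (Fin k → ℝ) =>
            ((0, 0, c) : (Fin d₂ → ℝ) × (Fin d₃ → ℝ) × (Fin d₄ → ℝ) × (Fin k → ℝ)) from
          measurable_const.prodMk (measurable_const.prodMk measurable_id))).map_eq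
  -- the shifts on the driving space preserve `Q`
  have hshift : ∀ e : (ℤ ⊕ ℤ ⊕ ℤ × ℤ) → (ℤ ⊕ ℤ ⊕ ℤ × ℤ), Function.Injective e →
      (∀ i, μ.map (Y (e i)) = μ.map (Y i)) →
      Q.map (fun x (i : ℤ ⊕ ℤ ⊕ ℤ × ℤ) => x (e i)) = Q := by
    intro e he hm
    rw [hQdef, Measure.map_map
      (measurable_pi_lambda _ fun i => measurable_pi_apply (e i)) hΨmeas]
    exact aux_map_bundle_eq (aux_iIndepFun_precomp hY he) hY
      (fun i => hYmeas (e i)) hYmeas hm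
  have hS1meas : Measurable (fun x : (ℤ ⊕ ℤ ⊕ ℤ × ℤ) →
      (Fin d₂ → ℝ) × (Fin d₃ → ℝ) × (Fin d₄ → ℝ) × (Fin k → ℝ) =>
      fun i => x (s17shJ i)) :=
    measurable_pi_lambda _ fun i => measurable_pi_apply (s17shJ i)
  have hS2meas : Measurable (fun x : (ℤ ⊕ ℤ ⊕ ℤ × ℤ) →
      (Fin d₂ → ℝ) × (Fin d₃ → ℝ) × (Fin d₄ → ℝ) × (Fin k → ℝ) =>
      fun i => x (s17shT i)) :=
    measurable_pi_lambda _ fun i => measurable_pi_apply (s17shT i)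
  have hS1mp : MeasurePreserving
      (fun x : (ℤ ⊕ ℤ ⊕ ℤ × ℤ) →
        (Fin d₂ → ℝ) × (Fin d₃ → ℝ) × (Fin d₄ → ℝ) × (Fin k → ℝ) =>
        fun i => x (s17shJ i)) Q Q :=
    ⟨hS1meas, hshift s17shJ s17shJ_inj hmargJ⟩
  have hS2mp : MeasurePreserving
      (fun x : (ℤ ⊕ ℤ ⊕ ℤ × ℤ) →
        (Fin d₂ → ℝ) × (Fin d₃ → ℝ) × (Fin d₄ → ℝ) × (Fin k → ℝ) =>
        fun i => x (s17shT i)) Q Q :=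
    ⟨hS2meas, hshift s17shT s17shT_inj hmargT⟩
  -- the factor map
  set Φ : ((ℤ ⊕ ℤ ⊕ ℤ × ℤ) →
      (Fin d₂ → ℝ) × (Fin d₃ → ℝ) × (Fin d₄ → ℝ) × (Fin k → ℝ)) → ℤ → ℤ → ℝ :=
    fun x j t => G ((x (.inl j)).1,
      fun s : ℕ => ((x (.inr (.inl (t - s)))).2.1, (x (.inr (.inr (j, t - s)))).2.2))
    with hΦdef
  have hΦmeas : Measurable Φ := by
    refine measurable_pi_lambda _ fun j => measurable_pi_lambda _ fun t => hG.comp ?_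
    refine (measurable_fst.comp (measurable_pi_apply _)).prodMk
      (measurable_pi_lambda _ fun s => ?_)
    exact ((measurable_fst.comp measurable_snd).comp (measurable_pi_apply _)).prodMk
      ((measurable_snd.comp measurable_snd).comp (measurable_pi_apply _))
  have hZΦ : (fun ω (j t : ℤ) => Z j t ω)
      = Φ ∘ (fun ω (i : ℤ ⊕ ℤ ⊕ ℤ × ℤ) => Y i ω) := by
    funext ω j t
    show Z j t ω = _
    rw [hZ j t ω]
    rfl
  have hPQ : Measure.map (fun ω (j t : ℤ) => Z j t ω) μ = Q.map Φ := by
    rw [hZΦ, hQdef, Measure.map_map hΦmeas hΨmeas]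
  -- semiconjugacies
  have hconj1 : (fun (x : ℤ → ℤ → ℝ) (j t : ℤ) => x (j + 1) t) ∘ Φ
      = Φ ∘ (fun x => fun i => x (s17shJ i)) := rfl
  have hconj2 : (fun (x : ℤ → ℤ → ℝ) (j t : ℤ) => x j (t + 1)) ∘ Φ
      = Φ ∘ (fun x => fun i => x (s17shT i)) := by
    funext x j t
    show G ((x (.inl j)).1,
        fun s : ℕ => ((x (.inr (.inl (t + 1 - s)))).2.1,
          (x (.inr (.inr (j, t + 1 - s)))).2.2))
      = G ((x (.inl j)).1,
        fun s : ℕ => ((x (.inr (.inl (t - s + 1)))).2.1,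
          (x (.inr (.inr (j, t - s + 1)))).2.2))
    have harith : ∀ s : ℕ, t + 1 - (s : ℤ) = t - s + 1 := fun s => by ring
    simp only [harith]
  have hτ1meas : Measurable (fun (x : ℤ → ℤ → ℝ) (j t : ℤ) => x (j + 1) t) :=
    measurable_pi_lambda _ fun j => measurable_pi_lambda _ fun t =>
      (measurable_pi_apply t).comp (measurable_pi_apply (j + 1))
  have hτ2meas : Measurable (fun (x : ℤ → ℤ → ℝ) (j t : ℤ) => x j (t + 1)) :=
    measurable_pi_lambda _ fun j => measurable_pi_lambda _ fun t =>
      (measurable_pi_apply (t + 1)).comp (measurable_pi_apply j)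
  have hmp1 : MeasurePreserving (fun (x : ℤ → ℤ → ℝ) (j t : ℤ) => x (j + 1) t)
      (Measure.map (fun ω (j t : ℤ) => Z j t ω) μ)
      (Measure.map (fun ω (j t : ℤ) => Z j t ω) μ) := by
    refine ⟨hτ1meas, ?_⟩
    rw [hPQ, Measure.map_map hτ1meas hΦmeas, hconj1,
      ← Measure.map_map hΦmeas hS1meas, hS1mp.map_eq]
  have hmp2 : MeasurePreserving (fun (x : ℤ → ℤ → ℝ) (j t : ℤ) => x j (t + 1))
      (Measure.map (fun ω (j t : ℤ) => Z j t ω) μ)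
      (Measure.map (fun ω (j t : ℤ) => Z j t ω) μ) := by
    refine ⟨hτ2meas, ?_⟩
    rw [hPQ, Measure.map_map hτ2meas hΦmeas, hconj2,
      ← Measure.map_map hΦmeas hS2meas, hS2mp.map_eq]
  refine ⟨hmp1, hmp2, ?_⟩
  intro A hA hA1 hA2
  set B := Φ ⁻¹' A with hBdef
  have hBmeas : MeasurableSet B := hΦmeas hA
  have hPA : Measure.map (fun ω (j t : ℤ) => Z j t ω) μ A = Q B := by
    rw [hPQ, Measure.map_apply hΦmeas hA]
  -- invariance of B under the two shifts
  have hS1B : (fun x : (ℤ ⊕ ℤ ⊕ ℤ × ℤ) →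
      (Fin d₂ → ℝ) × (Fin d₃ → ℝ) × (Fin d₄ → ℝ) × (Fin k → ℝ) =>
      fun i => x (s17shJ i)) ⁻¹' B = B := by
    rw [hBdef]
    calc (fun x : (ℤ ⊕ ℤ ⊕ ℤ × ℤ) → _ => fun i => x (s17shJ i)) ⁻¹' (Φ ⁻¹' A)
        = ((fun (x : ℤ → ℤ → ℝ) (j t : ℤ) => x (j + 1) t) ∘ Φ) ⁻¹' A := by
          rw [hconj1]; rfl
      _ = Φ ⁻¹' ((fun (x : ℤ → ℤ → ℝ) (j t : ℤ) => x (j + 1) t) ⁻¹' A) := rfl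
      _ = Φ ⁻¹' A := by rw [hA1]
  have hS2B : (fun x : (ℤ ⊕ ℤ ⊕ ℤ × ℤ) →
      (Fin d₂ → ℝ) × (Fin d₃ → ℝ) × (Fin d₄ → ℝ) × (Fin k → ℝ) =>
      fun i => x (s17shT i)) ⁻¹' B = B := by
    rw [hBdef]
    calc (fun x : (ℤ ⊕ ℤ ⊕ ℤ × ℤ) → _ => fun i => x (s17shT i)) ⁻¹' (Φ ⁻¹' A)
        = ((fun (x : ℤ → ℤ → ℝ) (j t : ℤ) => x j (t + 1)) ∘ Φ) ⁻¹' A := by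
          rw [hconj2]; rfl
      _ = Φ ⁻¹' ((fun (x : ℤ → ℤ → ℝ) (j t : ℤ) => x j (t + 1)) ⁻¹' A) := rfl
      _ = Φ ⁻¹' A := by rw [hA2]
  -- the combined shift `T`
  set T : ((ℤ ⊕ ℤ ⊕ ℤ × ℤ) →
      (Fin d₂ → ℝ) × (Fin d₃ → ℝ) × (Fin d₄ → ℝ) × (Fin k → ℝ)) →
      ((ℤ ⊕ ℤ ⊕ ℤ × ℤ) →
      (Fin d₂ → ℝ) × (Fin d₃ → ℝ) × (Fin d₄ → ℝ) × (Fin k → ℝ)) :=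
    (fun x => fun i => x (s17shJ i)) ∘ (fun x => fun i => x (s17shT i)) with hTdef
  have hTmp : MeasurePreserving T Q Q := hS1mp.comp hS2mp
  have hTB : T ⁻¹' B = B := by
    rw [hTdef, Set.preimage_comp, hS1B, hS2B]
  have hTnB : ∀ n : ℕ, T^[n] ⁻¹' B = B := by
    intro n
    induction n with
    | zero => simp
    | succ n ih => rw [Function.iterate_succ', Set.preimage_comp, hTB, ih]
  have hTe : ∀ (n : ℕ) x, T^[n] x = fun i => x (s17shB (n : ℤ) i) := by
    have h1 : ∀ (n : ℕ) x, T^[n] x = fun i => x ((s17shT ∘ s17shJ)^[n] i) := by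
      intro n
      induction n with
      | zero => intro x; rfl
      | succ n ih =>
          intro x
          rw [Function.iterate_succ_apply, ih]
          funext i
          rw [Function.iterate_succ_apply']
          rfl
    intro n x
    rw [h1 n x, s17_iter n]
  -- approximation by cylinders
  have halg : IsSetAlgebra (measurableCylinders (fun _ : ℤ ⊕ ℤ ⊕ ℤ × ℤ =>
      (Fin d₂ → ℝ) × (Fin d₃ → ℝ) × (Fin d₄ → ℝ) × (Fin k → ℝ))) :=
    ⟨empty_mem_measurableCylinders _, fun s hs => compl_mem_measurableCylinders hs,
     fun s t hs ht => union_mem_measurableCylinders hs ht⟩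
  have hdense := Measure.MeasureDense.of_generateFrom_isSetAlgebra_finite (μ := Q) halg
    generateFrom_measurableCylinders.symm
  set q := (Q B).toReal with hq
  have hq0 : 0 ≤ q := ENNReal.toReal_nonneg
  have hq1 : q ≤ 1 := by
    rw [hq]
    exact (ENNReal.toReal_le_of_le_ofReal zero_le_one (by simpa using prob_le_one))
  have hkeyε : ∀ ε : ℝ, 0 < ε → |q - q * q| ≤ 4 * ε := by
    intro ε hε
    obtain ⟨D, hD, hQBD⟩ := hdense.approx B hBmeas (measure_ne_top Q B) ε hε
    obtain ⟨s, Sset, hSset, rfl⟩ := (mem_measurableCylinders _).mp hD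
    set M := s.sup s17bnd with hM
    set n : ℕ := 2 * M + 1 with hn
    set s' := s.image (s17shB (n : ℤ)) with hs'
    have hdisj : Disjoint s s' := by
      rw [Finset.disjoint_left]
      intro i hi hmem
      obtain ⟨i', hi', hival⟩ := Finset.mem_image.mp hmem
      have h1 : s17bnd i ≤ M := Finset.le_sup hi
      have h2 : s17bnd i' ≤ M := Finset.le_sup hi'
      rw [← hival] at h1
      rcases i' with j | t | ⟨j, t⟩ <;>
        simp only [s17shB, s17bnd, hn, max_le_iff] at h1 h2 <;>
        push_cast at h1 <;> omega
    have hDmeas : MeasurableSet (cylinder s Sset) :=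
      MeasurableSet.cylinder (α := fun _ : ℤ ⊕ ℤ ⊕ ℤ × ℤ =>
        (Fin d₂ → ℝ) × (Fin d₃ → ℝ) × (Fin d₄ → ℝ) × (Fin k → ℝ)) s hSset
    set E := T^[n] ⁻¹' cylinder s Sset with hE
    have hEmeas : MeasurableSet E := (hTmp.iterate n).measurable hDmeas
    have hQE : Q E = Q (cylinder s Sset) :=
      (hTmp.iterate n).measure_preimage hDmeas.nullMeasurableSet
    have hBDE : Q (B ∆ E) = Q (B ∆ cylinder s Sset) := by
      have : B ∆ E = T^[n] ⁻¹' (B ∆ cylinder s Sset) := by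
        rw [Set.preimage_symmDiff, hTnB n]
      rw [this]
      exact (hTmp.iterate n).measure_preimage
        (hBmeas.symmDiff hDmeas).nullMeasurableSet
    -- independence of the two cylinders
    have hIF := hY.indepFun_finset s s' hdisj hYmeas
    have hr : Measurable (fun (y : (i : s') →
        (Fin d₂ → ℝ) × (Fin d₃ → ℝ) × (Fin d₄ → ℝ) × (Fin k → ℝ)) (i : s) =>
        y ⟨s17shB (n : ℤ) ↑i, Finset.mem_image_of_mem _ i.2⟩) :=
      measurable_pi_lambda _ fun i => measurable_pi_apply _
    have hIF2 : IndepFun (fun ω (i : s) => Y (↑i) ω)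
        (fun ω (i : s) => Y (s17shB (n : ℤ) ↑i) ω) μ := by
      have := hIF.comp measurable_id hr
      exact this
    have hpre1 : (fun ω (i : ℤ ⊕ ℤ ⊕ ℤ × ℤ) => Y i ω) ⁻¹' (cylinder s Sset)
        = (fun ω (i : s) => Y (↑i) ω) ⁻¹' Sset := rfl
    have hpre2 : (fun ω (i : ℤ ⊕ ℤ ⊕ ℤ × ℤ) => Y i ω) ⁻¹' E
        = (fun ω (i : s) => Y (s17shB (n : ℤ) ↑i) ω) ⁻¹' Sset := by
      rw [hE]
      ext ω
      simp only [Set.mem_preimage]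
      rw [hTe n]
      exact Iff.rfl
    have hQinter : Q (cylinder s Sset ∩ E) = Q (cylinder s Sset) * Q E := by
      rw [hQdef, Measure.map_apply hΨmeas (hDmeas.inter hEmeas),
        Measure.map_apply hΨmeas hDmeas, Measure.map_apply hΨmeas hEmeas,
        Set.preimage_inter, hpre1, hpre2]
      exact hIF2.measure_inter_preimage_eq_mul Sset Sset hSset hSset
    -- real-valued estimates
    set d := (Q (cylinder s Sset)).toReal with hd
    have hd0 : 0 ≤ d := ENNReal.toReal_nonneg
    have hd1 : d ≤ 1 := by
      rw [hd]
      exact (ENNReal.toReal_le_of_le_ofReal zero_le_one (by simpa using prob_le_one))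
    have hqd : |q - d| ≤ ε := by
      refine le_trans (abs_measureReal_sub_le_measureReal_symmDiff
        hBmeas.nullMeasurableSet hDmeas.nullMeasurableSet) ?_
      exact ENNReal.toReal_le_of_le_ofReal hε.le hQBD.le
    set r := (Q (cylinder s Sset ∩ E)).toReal with hrdef
    have hr_eq : r = d * d := by
      rw [hrdef, hQinter, ENNReal.toReal_mul, hQE, ← hd]
    have hqr : |q - r| ≤ ε + ε := by
      have hsub : B ∆ (cylinder s Sset ∩ E) ⊆ (B ∆ cylinder s Sset) ∪ (B ∆ E) := by
        intro x hx
        simp only [Set.mem_symmDiff, Set.mem_union, Set.mem_inter_iff] at *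
        tauto
      have hle : Q (B ∆ (cylinder s Sset ∩ E)) ≤ ENNReal.ofReal (ε + ε) := by
        refine le_trans (measure_mono hsub) (le_trans (measure_union_le _ _) ?_)
        rw [ENNReal.ofReal_add hε.le hε.le]
        exact add_le_add hQBD.le (le_trans (le_of_eq hBDE) hQBD.le)
      refine le_trans (abs_measureReal_sub_le_measureReal_symmDiff
        hBmeas.nullMeasurableSet (hDmeas.inter hEmeas).nullMeasurableSet) ?_
      exact ENNReal.toReal_le_of_le_ofReal (by linarith) hle
    exact s17arith hq0 hq1 hd0 hd1 hε hqd hqr hr_eq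
  have hqq : q = q * q := by
    by_contra hne
    have hpos : 0 < |q - q * q| := abs_pos.mpr (sub_ne_zero.mpr hne)
    have := hkeyε (|q - q * q| / 8) (by linarith)
    linarith
  have hcases : q = 0 ∨ q = 1 := by
    rcases mul_eq_zero.mp (show q * (1 - q) = 0 by nlinarith) with h | h
    · exact Or.inl h
    · exact Or.inr (by linarith)
  rcases hcases with h | h
  · left
    rw [hPA]
    rcases (ENNReal.toReal_eq_zero_iff _).mp h with h' | h'
    · exact h'
    · exact absurd h' (measure_ne_top Q B)
  · right
    rw [hPA]
    exact (ENNReal.toReal_eq_one_iff _).mp h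
end
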